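/- arXiv:1405.3860 — 14 statements merged into one kernel-verified Lean document; each statement's English description precedes it below -/
import Mathlib

section
/- There exists a spatial spectrum access game on a directed interference graph that does not admit any pure Nash equilibrium. Concretely: consider the game with three players 𝒩 = {1,2,3}, two channels ℳ = {1,2}, directed interference graph the 3-cycle with in-neighborhoods 𝒩_1 = {3}, 𝒩_2 = {1}, 𝒩_3 = {2}, and, for a fixed p ∈ (0,1), payoffs U_n(a) = p·∏_{i ∈ 𝒩_n : a_i = a_n} (1−p) for every channel profile a ∈ ℳ^3 (so U_n(a) = p(1−p) if player n's unique interferer chooses the same channel as n, and U_n(a) = p otherwise). This game has no pure Nash equilibrium: for each of the 8 profiles a some player n and channel m satisfy U_n(m, a_{−n}) > U_n(a). -/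
/-- The 3-player 2-channel spatial spectrum access game on the directed 3-cycle
(in-neighborhoods `𝒩_0 = {2}`, `𝒩_1 = {0}`, `𝒩_2 = {1}`), with Aloha-type payoff
`U_n(a) = p·(1-p)` if player `n`'s unique interferer chooses the same channel and
`U_n(a) = p` otherwise, has no pure Nash equilibrium. -/
theorem stmt_0 (p : ℝ) (hp0 : 0 < p) (hp1 : p < 1)
    (nbr : Fin 3 → Fin 3)
    (hn0 : nbr 0 = 2) (hn1 : nbr 1 = 0) (hn2 : nbr 2 = 1)
    (U : (Fin 3 → Fin 2) → Fin 3 → ℝ)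
    (hU : ∀ (a : Fin 3 → Fin 2) (n : Fin 3),
      U a n = p * (if a (nbr n) = a n then 1 - p else 1)) :
    ¬ ∃ a : Fin 3 → Fin 2, ∀ (n : Fin 3) (m : Fin 2),
        U (Function.update a n m) n ≤ U a n := by
  rintro ⟨a, h⟩
  have hnn : ∀ n : Fin 3, nbr n ≠ n := by
    intro n; fin_cases n <;> simp [hn0, hn1, hn2]
  have key : ∀ n : Fin 3, a (nbr n) ≠ a n := by
    intro n heq
    have hm : a n + 1 ≠ a n := by
      have : ∀ x : Fin 2, x + 1 ≠ x := by decide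
      exact this (a n)
    have hh := h n (a n + 1)
    rw [hU, hU] at hh
    rw [Function.update_of_ne (hnn n), Function.update_self, heq,
      if_neg (Ne.symm hm), if_pos rfl] at hh
    nlinarith
  have h0 := key 0; rw [hn0] at h0
  have h1 := key 1; rw [hn1] at h1
  have h2 := key 2; rw [hn2] at h2
  have : ∀ x y z : Fin 2, ¬(z ≠ x ∧ x ≠ y ∧ y ≠ z) := by decide
  exact this (a 0) (a 1) (a 2) ⟨h0, h1, h2⟩
end

section
/- Let Γ be a spatial spectrum access game on players {1,…,N+1} whose directed interference graph satisfies: 𝒩_n ⊆ {1,…,N} for every n ≤ N (the new player N+1 cannot generate interference to any original player) and 𝒩_{N+1} ⊆ {1,…,N}. If the N-player spatial spectrum access game obtained by restricting to players {1,…,N} (with the same in-neighborhoods 𝒩_n, the same θ, B, g) has a pure Nash equilibrium, then Γ has a pure Nash equilibrium. (In particular, extending a pure Nash equilibrium a* of the restricted game by a best response a*_{N+1} ∈ argmax_{m∈ℳ} θ_m B_m^{N+1} g_{N+1}(𝒩_{N+1}^m(a*)) yields a pure Nash equilibrium of Γ.) -/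
/-- Adding to a spatial spectrum access game a new player (player `N+1`, here `Fin.last N`)
who cannot generate interference to any original player (no in-neighborhood of any player
contains the new player) but may receive interference from original players, preserves
the existence of a pure Nash equilibrium. -/
theorem stmt_1 (N M : ℕ)
    (𝒩 : Fin (N + 1) → Finset (Fin (N + 1)))
    (θ : Fin (M + 1) → ℝ) (B : Fin (M + 1) → Fin (N + 1) → ℝ)
    (g : Fin (N + 1) → Finset (Fin (N + 1)) → ℝ)
    (hθ : ∀ m, 0 < θ m ∧ θ m < 1)
    (hB : ∀ m n, 0 < B m n)
    (hself : ∀ n, n ∉ 𝒩 n)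
    (hg : ∀ n S, S ⊆ 𝒩 n → 0 < g n S ∧ g n S < 1)
    -- the new player `Fin.last N` cannot generate interference to anyone:
    (hlast : ∀ n i, i ∈ 𝒩 n → i ≠ Fin.last N)
    -- payoff of the full (N+1)-player game:
    (U : (Fin (N + 1) → Fin (M + 1)) → Fin (N + 1) → ℝ)
    (hU : ∀ a n, U a n = θ (a n) * B (a n) n *
      g n ((𝒩 n).filter (fun i => a i = a n)))
    -- payoff of the restricted N-player game (same 𝒩, θ, B, g):
    (Ur : (Fin N → Fin (M + 1)) → Fin N → ℝ)
    (hUr : ∀ b n, Ur b n = θ (b n) * B (b n) n.castSucc *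
      g n.castSucc ((𝒩 n.castSucc).filter
        (fun i => ∃ j : Fin N, j.castSucc = i ∧ b j = b n)))
    -- the restricted game has a pure Nash equilibrium:
    (hNE : ∃ b : Fin N → Fin (M + 1), ∀ (n : Fin N) (m : Fin (M + 1)),
      Ur (Function.update b n m) n ≤ Ur b n) :
    -- then the full game has a pure Nash equilibrium:
    ∃ a : Fin (N + 1) → Fin (M + 1), ∀ (n : Fin (N + 1)) (m : Fin (M + 1)),
      U (Function.update a n m) n ≤ U a n := by
  classical
  obtain ⟨b, hb⟩ := hNE
  obtain ⟨m0, -, hm0⟩ := Finset.exists_max_image (Finset.univ : Finset (Fin (M + 1)))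
    (fun m => θ m * B m (Fin.last N) *
      g (Fin.last N) ((𝒩 (Fin.last N)).filter (fun i => Fin.snoc (α := fun _ => Fin (M + 1)) b m i = m)))
    ⟨0, Finset.mem_univ 0⟩
  set a : Fin (N + 1) → Fin (M + 1) := Fin.snoc b m0 with ha
  refine ⟨a, ?_⟩
  intro n m
  induction n using Fin.lastCases with
  | last =>
    have h1 : U (Function.update a (Fin.last N) m) (Fin.last N) =
        θ m * B m (Fin.last N) * g (Fin.last N)
          ((𝒩 (Fin.last N)).filter (fun i => Fin.snoc (α := fun _ => Fin (M + 1)) b m i = m)) := by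
      rw [hU]
      simp only [Function.update_self]
      congr 2
      apply Finset.filter_congr
      intro i hi
      obtain ⟨j, rfl⟩ := Fin.exists_castSucc_eq.2 (hlast _ _ hi)
      rw [Function.update_of_ne (Fin.castSucc_lt_last j).ne, ha,
        Fin.snoc_castSucc, Fin.snoc_castSucc]
    have h2 : U a (Fin.last N) =
        θ m0 * B m0 (Fin.last N) * g (Fin.last N)
          ((𝒩 (Fin.last N)).filter (fun i => Fin.snoc (α := fun _ => Fin (M + 1)) b m0 i = m0)) := by
      rw [hU]
      congr 2
      · rw [ha, Fin.snoc_last]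
      · rw [ha, Fin.snoc_last]
      · apply Finset.filter_congr
        intro i hi
        obtain ⟨j, rfl⟩ := Fin.exists_castSucc_eq.2 (hlast _ _ hi)
        simp [ha]
    rw [h1, h2]
    exact hm0 m (Finset.mem_univ m)
  | cast n' =>
    have key : ∀ j : Fin N, Function.update a n'.castSucc m j.castSucc
        = Function.update b n' m j := by
      intro j
      by_cases hj : j = n'
      · subst hj; simp
      · rw [Function.update_of_ne (by simpa [Fin.castSucc_inj] using hj),
          Function.update_of_ne hj, ha, Fin.snoc_castSucc]
    have h1 : U (Function.update a n'.castSucc m) n'.castSucc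
        = Ur (Function.update b n' m) n' := by
      rw [hU, hUr, key n']
      congr 2
      apply Finset.filter_congr
      intro i hi
      obtain ⟨j, rfl⟩ := Fin.exists_castSucc_eq.2 (hlast _ _ hi)
      rw [key j]
      constructor
      · intro h; exact ⟨j, rfl, h⟩
      · rintro ⟨j', hj', h⟩
        rw [Fin.castSucc_inj] at hj'
        subst hj'; exact h
    have h2 : U a n'.castSucc = Ur b n' := by
      have hv : a n'.castSucc = b n' := by simp [ha]
      rw [hU, hUr, hv]
      congr 2
      apply Finset.filter_congr
      intro i hi
      obtain ⟨j, rfl⟩ := Fin.exists_castSucc_eq.2 (hlast _ _ hi)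
      rw [ha, Fin.snoc_castSucc]
      constructor
      · intro h; exact ⟨j, rfl, h⟩
      · rintro ⟨j', hj', h⟩
        rw [Fin.castSucc_inj] at hj'
        subst hj'; exact h
    rw [h1, h2]
    exact hb n' m
end

section
/- Any spatial spectrum access game whose directed interference graph is acyclic has a pure Nash equilibrium. That is, if the relation 'i ∈ 𝒩_j' admits no directed cycle (equivalently, there is a linear ordering of the players such that i ∈ 𝒩_j implies i precedes j), then for arbitrary channel idle probabilities θ_m ∈ (0,1), data rates B_m^n > 0, and channel grabbing functions g_n with values in (0,1), the game possesses a pure Nash equilibrium. -/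
/-- Any spatial spectrum access game whose directed interference graph is acyclic
(the relation `i ∈ 𝒩 j` admits no directed cycle) has a pure Nash equilibrium. -/
theorem stmt_2 (N M : ℕ)
    (𝒩 : Fin (N + 1) → Finset (Fin (N + 1)))
    (θ : Fin (M + 1) → ℝ) (B : Fin (M + 1) → Fin (N + 1) → ℝ)
    (g : Fin (N + 1) → Finset (Fin (N + 1)) → ℝ)
    (hθ : ∀ m, 0 < θ m ∧ θ m < 1)
    (hB : ∀ m n, 0 < B m n)
    (hself : ∀ n, n ∉ 𝒩 n)
    (hg : ∀ n S, S ⊆ 𝒩 n → 0 < g n S ∧ g n S < 1)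
    -- acyclicity: no directed cycle in the relation "i interferes with j"
    (hacyc : ∀ i : Fin (N + 1), ¬ Relation.TransGen (fun i j => i ∈ 𝒩 j) i i)
    (U : (Fin (N + 1) → Fin (M + 1)) → Fin (N + 1) → ℝ)
    (hU : ∀ a n, U a n = θ (a n) * B (a n) n *
      g n ((𝒩 n).filter (fun i => a i = a n))) :
    ∃ a : Fin (N + 1) → Fin (M + 1), ∀ (n : Fin (N + 1)) (m : Fin (M + 1)),
      U (Function.update a n m) n ≤ U a n := by
  classical
  set r : Fin (N + 1) → Fin (N + 1) → Prop :=
    fun i j => Relation.TransGen (fun i j => i ∈ 𝒩 j) i j with hr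
  haveI : IsTrans (Fin (N + 1)) r := ⟨fun _ _ _ h₁ h₂ => h₁.trans h₂⟩
  haveI : IsIrrefl (Fin (N + 1)) r := ⟨hacyc⟩
  have hwf : WellFounded r := Finite.wellFounded_of_trans_of_irrefl r
  -- payoff of player n choosing m given neighbors' choices v
  set φ : Fin (N + 1) → (Fin (N + 1) → Fin (M + 1)) → Fin (M + 1) → ℝ :=
    fun n v m => θ m * B m n * g n ((𝒩 n).filter (fun i => v i = m)) with hφ
  have hmax : ∀ n v, ∃ m : Fin (M + 1), ∀ m', φ n v m' ≤ φ n v m := by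
    intro n v
    exact Finite.exists_max (φ n v)
  choose pick hpick using hmax
  set F : ∀ n : Fin (N + 1), (∀ i, r i n → Fin (M + 1)) → Fin (M + 1) :=
    fun n rec =>
      pick n (fun i => if h : i ∈ 𝒩 n then rec i (Relation.TransGen.single h) else 0)
    with hF
  set a : Fin (N + 1) → Fin (M + 1) := hwf.fix F with ha
  have hfix : ∀ n, a n = pick n (fun i => if _ : i ∈ 𝒩 n then a i else 0) := by
    intro n
    rw [ha, hwf.fix_eq F n]
  refine ⟨a, fun n m => ?_⟩
  set v : Fin (N + 1) → Fin (M + 1) := fun i => if _ : i ∈ 𝒩 n then a i else 0 with hv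
  have hfilter : ∀ (b : Fin (N + 1) → Fin (M + 1)) (m' : Fin (M + 1)),
      (∀ i ∈ 𝒩 n, b i = a i) →
      (𝒩 n).filter (fun i => b i = m') = (𝒩 n).filter (fun i => v i = m') := by
    intro b m' hb
    apply Finset.filter_congr
    intro i hi
    simp [hb i hi, hv, hi]
  have hupd : ∀ i ∈ 𝒩 n, Function.update a n m i = a i := by
    intro i hi
    have : i ≠ n := fun h => hself n (h ▸ hi)
    simp [Function.update_of_ne this]
  have h1 : U (Function.update a n m) n = φ n v m := by
    rw [hU, hφ]
    simp only [Function.update_self]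
    rw [hfilter _ m hupd]
  have h2 : U a n = φ n v (a n) := by
    rw [hU, hφ]
    rw [hfilter _ (a n) (fun i _ => rfl)]
  rw [h1, h2, hfix n]
  exact hpick n v m
end

section
/- Any spatial spectrum access game satisfying the congestion property whose directed interference graph is a directed tree has a pure Nash equilibrium. Here the graph is a directed tree if the undirected graph obtained by ignoring edge directions (i adjacent to j iff i ∈ 𝒩_j or j ∈ 𝒩_i) is a tree, i.e., connected and acyclic. -/
open Finset

noncomputable def ssaArgmax {M : ℕ} (f : Fin (M + 1) → ℝ) : Fin (M + 1) :=
  (Finset.univ.filter fun x => ∀ y, f y ≤ f x).min' (by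
    obtain ⟨b, _, hb⟩ := Finset.exists_max_image Finset.univ f ⟨0, Finset.mem_univ 0⟩
    exact ⟨b, by
      simp only [Finset.mem_filter, Finset.mem_univ, true_and]
      exact fun y => hb y (Finset.mem_univ y)⟩)

lemma le_ssaArgmax {M : ℕ} (f : Fin (M + 1) → ℝ) (x : Fin (M + 1)) :
    f x ≤ f (ssaArgmax f) := by
  have h := Finset.min'_mem (Finset.univ.filter fun x => ∀ y, f y ≤ f x) (by
    obtain ⟨b, _, hb⟩ := Finset.exists_max_image Finset.univ f ⟨0, Finset.mem_univ 0⟩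
    exact ⟨b, by
      simp only [Finset.mem_filter, Finset.mem_univ, true_and]
      exact fun y => hb y (Finset.mem_univ y)⟩)
  rw [Finset.mem_filter] at h
  exact h.2 x

lemma ssaArgmax_le {M : ℕ} (f : Fin (M + 1) → ℝ) (y : Fin (M + 1))
    (hy : ∀ x, f x ≤ f y) : ssaArgmax f ≤ y :=
  Finset.min'_le _ _ (by simp only [Finset.mem_filter, Finset.mem_univ, true_and]; exact hy)

open Classical in
noncomputable def ssaChi {N M : ℕ} (𝒩 : Fin (N + 1) → Finset (Fin (N + 1)))
    (θ : Fin (M + 1) → ℝ) (B : Fin (M + 1) → Fin (N + 1) → ℝ)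
    (g : Fin (N + 1) → Finset (Fin (N + 1)) → ℝ)
    (par : Fin (N + 1) → Fin (N + 1)) (d : Fin (N + 1) → ℕ)
    (hd : ∀ i, d i ≤ N) (hp : ∀ i, par i ≠ i → d (par i) < d i)
    (i : Fin (N + 1)) (c : Fin (M + 1)) : Fin (M + 1) :=
  let r : Fin (N + 1) → Fin (M + 1) → Fin (M + 1) := fun j =>
    if h : par j = i ∧ j ≠ i then (fun x => ssaChi 𝒩 θ B g par d hd hp j x)
    else fun _ => 0
  ssaArgmax (fun x => θ x * B x i * g i ((𝒩 i).filter (fun j =>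
    if par j = i ∧ j ≠ i then r j x = x
    else (x = c ∧ j = par i))))
termination_by N + 1 - d i
decreasing_by
  have h1 : par j ≠ j := by
    intro e
    apply h.2
    rw [← h.1]; exact e.symm
  have h2 := hp j h1
  rw [h.1] at h2
  have h3 := hd j
  omega

open Classical in
noncomputable def ssaSet {N M : ℕ} (𝒩 : Fin (N + 1) → Finset (Fin (N + 1)))
    (θ : Fin (M + 1) → ℝ) (B : Fin (M + 1) → Fin (N + 1) → ℝ)
    (g : Fin (N + 1) → Finset (Fin (N + 1)) → ℝ)
    (par : Fin (N + 1) → Fin (N + 1)) (d : Fin (N + 1) → ℕ)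
    (hd : ∀ i, d i ≤ N) (hp : ∀ i, par i ≠ i → d (par i) < d i)
    (i : Fin (N + 1)) (c : Fin (M + 1)) (x : Fin (M + 1)) : Finset (Fin (N + 1)) :=
  (𝒩 i).filter (fun j =>
    if par j = i ∧ j ≠ i then ssaChi 𝒩 θ B g par d hd hp j x = x
    else (x = c ∧ j = par i))

noncomputable def ssaV {N M : ℕ} (𝒩 : Fin (N + 1) → Finset (Fin (N + 1)))
    (θ : Fin (M + 1) → ℝ) (B : Fin (M + 1) → Fin (N + 1) → ℝ)
    (g : Fin (N + 1) → Finset (Fin (N + 1)) → ℝ)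
    (par : Fin (N + 1) → Fin (N + 1)) (d : Fin (N + 1) → ℕ)
    (hd : ∀ i, d i ≤ N) (hp : ∀ i, par i ≠ i → d (par i) < d i)
    (i : Fin (N + 1)) (c : Fin (M + 1)) (x : Fin (M + 1)) : ℝ :=
  θ x * B x i * g i (ssaSet 𝒩 θ B g par d hd hp i c x)

lemma ssaChi_eq {N M : ℕ} (𝒩 : Fin (N + 1) → Finset (Fin (N + 1)))
    (θ : Fin (M + 1) → ℝ) (B : Fin (M + 1) → Fin (N + 1) → ℝ)
    (g : Fin (N + 1) → Finset (Fin (N + 1)) → ℝ)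
    (par : Fin (N + 1) → Fin (N + 1)) (d : Fin (N + 1) → ℕ)
    (hd : ∀ i, d i ≤ N) (hp : ∀ i, par i ≠ i → d (par i) < d i)
    (i : Fin (N + 1)) (c : Fin (M + 1)) :
    ssaChi 𝒩 θ B g par d hd hp i c
      = ssaArgmax (ssaV 𝒩 θ B g par d hd hp i c) := by
  rw [ssaChi]
  congr 1
  funext x
  unfold ssaV ssaSet
  congr 1
  congr 1
  apply Finset.filter_congr
  intro j _
  by_cases h : par j = i ∧ j ≠ i
  · simp only [if_pos h, dif_pos h]
  · simp only [if_neg h]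

open Classical in
noncomputable def ssaProf {N M : ℕ} (𝒩 : Fin (N + 1) → Finset (Fin (N + 1)))
    (θ : Fin (M + 1) → ℝ) (B : Fin (M + 1) → Fin (N + 1) → ℝ)
    (g : Fin (N + 1) → Finset (Fin (N + 1)) → ℝ)
    (par : Fin (N + 1) → Fin (N + 1)) (d : Fin (N + 1) → ℕ)
    (hd : ∀ i, d i ≤ N) (hp : ∀ i, par i ≠ i → d (par i) < d i)
    (i : Fin (N + 1)) : Fin (M + 1) :=
  ssaChi 𝒩 θ B g par d hd hp i
    (if h : par i = i then 0 else ssaProf 𝒩 θ B g par d hd hp (par i))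
termination_by d i
decreasing_by exact hp i h

section SSA

variable {N M : ℕ} (𝒩 : Fin (N + 1) → Finset (Fin (N + 1)))
    (θ : Fin (M + 1) → ℝ) (B : Fin (M + 1) → Fin (N + 1) → ℝ)
    (g : Fin (N + 1) → Finset (Fin (N + 1)) → ℝ)
    (par : Fin (N + 1) → Fin (N + 1)) (d : Fin (N + 1) → ℕ)
    (hd : ∀ i, d i ≤ N) (hp : ∀ i, par i ≠ i → d (par i) < d i)

lemma ssaSet_subset (i : Fin (N + 1)) (c x : Fin (M + 1)) :
    ssaSet 𝒩 θ B g par d hd hp i c x ⊆ 𝒩 i :=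
  Finset.filter_subset _ _

lemma ssaSet_eq_of_ne {i : Fin (N + 1)} {c c' x : Fin (M + 1)}
    (h1 : x ≠ c) (h2 : x ≠ c') :
    ssaSet 𝒩 θ B g par d hd hp i c x = ssaSet 𝒩 θ B g par d hd hp i c' x := by
  unfold ssaSet
  apply Finset.filter_congr
  intro j _
  by_cases h : par j = i ∧ j ≠ i
  · simp only [if_pos h]
  · simp only [if_neg h]
    constructor
    · rintro ⟨e, -⟩; exact absurd e h1
    · rintro ⟨e, -⟩; exact absurd e h2

lemma ssaSet_subset_of_ne {i : Fin (N + 1)} {c c' : Fin (M + 1)} (hcc' : c ≠ c') :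
    ssaSet 𝒩 θ B g par d hd hp i c' c ⊆ ssaSet 𝒩 θ B g par d hd hp i c c := by
  intro j hj
  unfold ssaSet at hj ⊢
  rw [Finset.mem_filter] at hj ⊢
  refine ⟨hj.1, ?_⟩
  by_cases h : par j = i ∧ j ≠ i
  · rw [if_pos h] at hj ⊢; exact hj.2
  · rw [if_neg h] at hj ⊢; exact absurd hj.2.1 hcc'

variable (hθ : ∀ m, 0 < θ m ∧ θ m < 1) (hB : ∀ m n, 0 < B m n)
    (hCP : ∀ n S T, S ⊆ T → T ⊆ 𝒩 n → g n T ≤ g n S)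

include hθ hB hCP in
lemma ssaV_self_le {i : Fin (N + 1)} {c c' : Fin (M + 1)} (hcc' : c ≠ c') :
    ssaV 𝒩 θ B g par d hd hp i c c ≤ ssaV 𝒩 θ B g par d hd hp i c' c := by
  unfold ssaV
  apply mul_le_mul_of_nonneg_left
  · exact hCP i _ _ (ssaSet_subset_of_ne 𝒩 θ B g par d hd hp hcc')
      (ssaSet_subset 𝒩 θ B g par d hd hp i c c)
  · exact le_of_lt (mul_pos (hθ c).1 (hB c i))

lemma ssaV_eq_of_ne {i : Fin (N + 1)} {c c' x : Fin (M + 1)}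
    (h1 : x ≠ c) (h2 : x ≠ c') :
    ssaV 𝒩 θ B g par d hd hp i c x = ssaV 𝒩 θ B g par d hd hp i c' x := by
  unfold ssaV
  rw [ssaSet_eq_of_ne 𝒩 θ B g par d hd hp h1 h2]

include hθ hB hCP in
lemma ssaChi_mono {i : Fin (N + 1)} {y c : Fin (M + 1)}
    (hy : ssaChi 𝒩 θ B g par d hd hp i y = y) (hc : c ≠ y) :
    ssaChi 𝒩 θ B g par d hd hp i c = y := by
  have hargy : ssaArgmax (ssaV 𝒩 θ B g par d hd hp i y) = y := by
    rw [← ssaChi_eq, hy]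
  have hPy : ∀ x, ssaV 𝒩 θ B g par d hd hp i y x ≤ ssaV 𝒩 θ B g par d hd hp i y y := by
    intro x
    have := le_ssaArgmax (ssaV 𝒩 θ B g par d hd hp i y) x
    rwa [hargy] at this
  have hVyy_le : ssaV 𝒩 θ B g par d hd hp i y y ≤ ssaV 𝒩 θ B g par d hd hp i c y :=
    ssaV_self_le 𝒩 θ B g par d hd hp hθ hB hCP hc.symm
  have hmax : ∀ x, ssaV 𝒩 θ B g par d hd hp i c x ≤ ssaV 𝒩 θ B g par d hd hp i c y := by
    intro x
    by_cases hxy : x = y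
    · subst hxy; exact le_refl _
    by_cases hxc : x = c
    · subst hxc
      calc ssaV 𝒩 θ B g par d hd hp i x x
          ≤ ssaV 𝒩 θ B g par d hd hp i y x :=
            ssaV_self_le 𝒩 θ B g par d hd hp hθ hB hCP hxy
        _ ≤ ssaV 𝒩 θ B g par d hd hp i y y := hPy x
        _ ≤ ssaV 𝒩 θ B g par d hd hp i x y := hVyy_le
    · calc ssaV 𝒩 θ B g par d hd hp i c x
          = ssaV 𝒩 θ B g par d hd hp i y x :=
            ssaV_eq_of_ne 𝒩 θ B g par d hd hp hxc hxy
        _ ≤ ssaV 𝒩 θ B g par d hd hp i y y := hPy x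
        _ ≤ ssaV 𝒩 θ B g par d hd hp i c y := hVyy_le
  rw [ssaChi_eq]
  set z := ssaArgmax (ssaV 𝒩 θ B g par d hd hp i c) with hzdef
  have hzy : z ≤ y := ssaArgmax_le _ y hmax
  have hVeq : ssaV 𝒩 θ B g par d hd hp i c z = ssaV 𝒩 θ B g par d hd hp i c y :=
    le_antisymm (hmax z) (le_ssaArgmax _ y)
  by_cases hzy' : z = y
  · exact hzy'
  exfalso
  by_cases hzc : z = c
  · -- z = c case
    have h1 : ssaV 𝒩 θ B g par d hd hp i y y ≤ ssaV 𝒩 θ B g par d hd hp i y c := by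
      calc ssaV 𝒩 θ B g par d hd hp i y y
          ≤ ssaV 𝒩 θ B g par d hd hp i c y := hVyy_le
        _ = ssaV 𝒩 θ B g par d hd hp i c z := hVeq.symm
        _ = ssaV 𝒩 θ B g par d hd hp i c c := by rw [hzc]
        _ ≤ ssaV 𝒩 θ B g par d hd hp i y c :=
            ssaV_self_le 𝒩 θ B g par d hd hp hθ hB hCP hc
    have h2 : ∀ x, ssaV 𝒩 θ B g par d hd hp i y x ≤ ssaV 𝒩 θ B g par d hd hp i y c :=
      fun x => le_trans (hPy x) h1
    have h3 : y ≤ c := by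
      have := ssaArgmax_le (ssaV 𝒩 θ B g par d hd hp i y) c h2
      rwa [hargy] at this
    rw [← hzc] at h3
    exact hzy' (le_antisymm hzy h3)
  · -- z ≠ c, z ≠ y
    have h1 : ssaV 𝒩 θ B g par d hd hp i y y ≤ ssaV 𝒩 θ B g par d hd hp i y z := by
      calc ssaV 𝒩 θ B g par d hd hp i y y
          ≤ ssaV 𝒩 θ B g par d hd hp i c y := hVyy_le
        _ = ssaV 𝒩 θ B g par d hd hp i c z := hVeq.symm
        _ = ssaV 𝒩 θ B g par d hd hp i y z :=
            ssaV_eq_of_ne 𝒩 θ B g par d hd hp hzc hzy'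
    have h2 : ∀ x, ssaV 𝒩 θ B g par d hd hp i y x ≤ ssaV 𝒩 θ B g par d hd hp i y z :=
      fun x => le_trans (hPy x) h1
    have h3 : y ≤ z := by
      have := ssaArgmax_le (ssaV 𝒩 θ B g par d hd hp i y) z h2
      rwa [hargy] at this
    exact hzy' (le_antisymm hzy h3)

include d hd hp hθ hB hCP in
lemma ssaNE (hself : ∀ n, n ∉ 𝒩 n)
    (hnbr : ∀ i j, j ∈ 𝒩 i → j = par i ∨ par j = i) :
    ∃ a : Fin (N + 1) → Fin (M + 1), ∀ (n : Fin (N + 1)) (m : Fin (M + 1)),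
      θ m * B m n * g n ((𝒩 n).filter (fun j => a j = m))
        ≤ θ (a n) * B (a n) n * g n ((𝒩 n).filter (fun j => a j = a n)) := by
  classical
  set a := ssaProf 𝒩 θ B g par d hd hp with hadef
  have ha : ∀ i, a i = ssaChi 𝒩 θ B g par d hd hp i
      (if h : par i = i then 0 else a (par i)) := by
    intro i
    rw [hadef]
    conv_lhs => rw [ssaProf]
  refine ⟨a, ?_⟩
  intro n m
  set c := (if h : par n = n then (0 : Fin (M + 1)) else a (par n)) with hcdef
  have hchild : ∀ j, par j = n → j ≠ n →
      a j = ssaChi 𝒩 θ B g par d hd hp j (a n) := by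
    intro j h1 h2
    have hpj : ¬ (par j = j) := by rw [h1]; exact fun e => h2 e.symm
    rw [ha j]
    congr 1
    rw [dif_neg hpj, h1]
  have hparval : par n ≠ n → c = a (par n) := fun h => by rw [hcdef, dif_neg h]
  have F1 : (𝒩 n).filter (fun j => a j = a n) = ssaSet 𝒩 θ B g par d hd hp n c (a n) := by
    unfold ssaSet
    apply Finset.filter_congr
    intro j hj
    have hjn : j ≠ n := fun e => hself n (e ▸ hj)
    by_cases hch : par j = n ∧ j ≠ n
    · rw [if_pos hch, hchild j hch.1 hch.2]
    · have hjp : j = par n := by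
        rcases hnbr n j hj with h | h
        · exact h
        · exact absurd ⟨h, hjn⟩ hch
      rw [if_neg hch]
      have hpn : par n ≠ n := by rw [← hjp]; exact hjn
      rw [hparval hpn, ← hjp]
      constructor
      · intro e; exact ⟨e.symm, rfl⟩
      · rintro ⟨e, -⟩; exact e.symm
  have F2 : ssaSet 𝒩 θ B g par d hd hp n c m ⊆ (𝒩 n).filter (fun j => a j = m) := by
    intro j hj
    unfold ssaSet at hj
    rw [Finset.mem_filter] at hj ⊢
    refine ⟨hj.1, ?_⟩
    have hjn : j ≠ n := fun e => hself n (e ▸ hj.1)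
    by_cases hch : par j = n ∧ j ≠ n
    · rw [if_pos hch] at hj
      rw [hchild j hch.1 hch.2]
      by_cases hm : a n = m
      · rw [hm]; exact hj.2
      · exact ssaChi_mono 𝒩 θ B g par d hd hp hθ hB hCP hj.2 hm
    · rw [if_neg hch] at hj
      obtain ⟨e1, e2⟩ := hj.2
      have hpn : par n ≠ n := by rw [← e2]; exact hjn
      rw [e2, ← hparval hpn, ← e1]
  have hAn : a n = ssaArgmax (ssaV 𝒩 θ B g par d hd hp n c) := by
    rw [ha n, ssaChi_eq]
  calc θ m * B m n * g n ((𝒩 n).filter (fun j => a j = m))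
      ≤ θ m * B m n * g n (ssaSet 𝒩 θ B g par d hd hp n c m) := by
        apply mul_le_mul_of_nonneg_left
        · exact hCP n _ _ F2 (Finset.filter_subset _ _)
        · exact le_of_lt (mul_pos (hθ m).1 (hB m n))
    _ = ssaV 𝒩 θ B g par d hd hp n c m := rfl
    _ ≤ ssaV 𝒩 θ B g par d hd hp n c (a n) := by
        conv_rhs => rw [hAn]
        exact le_ssaArgmax _ m
    _ = θ (a n) * B (a n) n * g n ((𝒩 n).filter (fun j => a j = a n)) := by
        unfold ssaV; rw [F1]

end SSA

lemma ssa_isPath_concat {V : Type*} {G : SimpleGraph V} {u v x : V} {p : G.Walk u v}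
    (hp : p.IsPath) (h : G.Adj v x) (hx : x ∉ p.support) : (p.concat h).IsPath := by
  rw [← SimpleGraph.Walk.isPath_reverse_iff, SimpleGraph.Walk.reverse_concat]
  refine (SimpleGraph.Walk.cons_isPath_iff _ _).2 ⟨hp.reverse, ?_⟩
  rw [SimpleGraph.Walk.support_reverse, List.mem_reverse]
  exact hx

lemma ssa_support_dist {V : Type*} {G : SimpleGraph V} {r j : V} {w : G.Walk r j}
    (hw : w.length = G.dist r j) {v : V} (hv : v ∈ w.support) :
    G.dist r v < G.dist r j ∨ v = j := by
  classical
  have hsplit : (w.takeUntil v hv).length + (w.dropUntil v hv).length = w.length := by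
    rw [← SimpleGraph.Walk.length_append, SimpleGraph.Walk.take_spec]
  have h1 : G.dist r v ≤ (w.takeUntil v hv).length := SimpleGraph.dist_le _
  by_cases h0 : (w.dropUntil v hv).length = 0
  · right; exact SimpleGraph.Walk.eq_of_length_eq_zero h0
  · left; omega

lemma ssa_adj_dist_ne {V : Type*} [Fintype V] [DecidableEq V] {G : SimpleGraph V}
    (ht : G.IsTree) (r : V) {i j : V} (hadj : G.Adj i j) :
    G.dist r i ≠ G.dist r j := by
  intro heq
  obtain ⟨w, hwp, hwl⟩ := ht.isConnected.exists_path_of_dist r j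
  have hi : i ∉ w.support := by
    intro hmem
    rcases ssa_support_dist hwl hmem with h | h
    · omega
    · exact hadj.ne h
  have hq : (w.concat hadj.symm).IsPath := ssa_isPath_concat hwp hadj.symm hi
  obtain ⟨w', hwp', hwl'⟩ := ht.isConnected.exists_path_of_dist r i
  have huniq := ht.IsAcyclic.path_unique
    (⟨w.concat hadj.symm, hq⟩ : G.Path r i) (⟨w', hwp'⟩ : G.Path r i)
  have hlen : (w.concat hadj.symm).length = w'.length :=
    congrArg (fun (p : G.Path r i) => p.1.length) huniq
  rw [SimpleGraph.Walk.length_concat, hwl, hwl'] at hlen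
  omega

lemma ssa_parent_unique {V : Type*} [Fintype V] [DecidableEq V] {G : SimpleGraph V}
    (ht : G.IsTree) (r : V) {i j1 j2 : V}
    (h1 : G.Adj i j1) (h2 : G.Adj i j2)
    (hd1 : G.dist r j1 < G.dist r i) (hd2 : G.dist r j2 < G.dist r i) : j1 = j2 := by
  obtain ⟨w1, hp1, hl1⟩ := ht.isConnected.exists_path_of_dist r j1
  obtain ⟨w2, hp2, hl2⟩ := ht.isConnected.exists_path_of_dist r j2
  have hi1 : i ∉ w1.support := by
    intro hmem
    rcases ssa_support_dist hl1 hmem with h | h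
    · omega
    · subst h; exact absurd hd1 (lt_irrefl _)
  have hi2 : i ∉ w2.support := by
    intro hmem
    rcases ssa_support_dist hl2 hmem with h | h
    · omega
    · subst h; exact absurd hd2 (lt_irrefl _)
  have hq1 : (w1.concat h1.symm).IsPath := ssa_isPath_concat hp1 h1.symm hi1
  have hq2 : (w2.concat h2.symm).IsPath := ssa_isPath_concat hp2 h2.symm hi2
  have huniq := ht.IsAcyclic.path_unique
    (⟨w1.concat h1.symm, hq1⟩ : G.Path r i) (⟨w2.concat h2.symm, hq2⟩ : G.Path r i)
  have he : w1.concat h1.symm = w2.concat h2.symm := by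
    exact congrArg Subtype.val huniq
  have hv := congrArg (fun (p : G.Walk r i) => p.reverse.getVert 1) he
  simp only [SimpleGraph.Walk.reverse_concat,
    SimpleGraph.Walk.getVert_cons_succ, SimpleGraph.Walk.getVert_zero] at hv
  exact hv

lemma ssa_dist_lt_card {V : Type*} [Fintype V] {G : SimpleGraph V}
    (hc : G.Connected) (r v : V) : G.dist r v < Fintype.card V := by
  obtain ⟨w, hwp, hwl⟩ := hc.exists_path_of_dist r v
  rw [← hwl]
  exact hwp.length_lt



/-- The undirected graph obtained from the directed interference graph by ignoring
the directions of edges: `i` is adjacent to `j` iff `i ∈ 𝒩 j` or `j ∈ 𝒩 i`. -/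
def stmt4UndirGraph {N : ℕ} (𝒩 : Fin N → Finset (Fin N)) : SimpleGraph (Fin N) where
  Adj i j := i ≠ j ∧ (i ∈ 𝒩 j ∨ j ∈ 𝒩 i)
  symm := ⟨fun i j h => ⟨h.1.symm, h.2.symm⟩⟩
  loopless := ⟨fun i h => h.1 rfl⟩

/-- Any spatial spectrum access game satisfying the congestion property whose directed
interference graph is a directed tree (the underlying undirected graph is a tree)
has a pure Nash equilibrium. -/
theorem stmt_4 (N M : ℕ)
    (𝒩 : Fin (N + 1) → Finset (Fin (N + 1)))
    (hself : ∀ n, n ∉ 𝒩 n)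
    (htree : (stmt4UndirGraph 𝒩).IsTree)
    (θ : Fin (M + 1) → ℝ) (B : Fin (M + 1) → Fin (N + 1) → ℝ)
    (g : Fin (N + 1) → Finset (Fin (N + 1)) → ℝ)
    (hθ : ∀ m, 0 < θ m ∧ θ m < 1)
    (hB : ∀ m n, 0 < B m n)
    (hg : ∀ n S, S ⊆ 𝒩 n → 0 < g n S ∧ g n S < 1)
    -- congestion property:
    (hCP : ∀ n S T, S ⊆ T → T ⊆ 𝒩 n → g n T ≤ g n S)
    (U : (Fin (N + 1) → Fin (M + 1)) → Fin (N + 1) → ℝ)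
    (hU : ∀ a n, U a n = θ (a n) * B (a n) n *
      g n ((𝒩 n).filter (fun i => a i = a n))) :
    ∃ a : Fin (N + 1) → Fin (M + 1), ∀ (n : Fin (N + 1)) (m : Fin (M + 1)),
      U (Function.update a n m) n ≤ U a n := by
  classical
  set G := stmt4UndirGraph 𝒩 with hGdef
  have hadj : ∀ {i j : Fin (N + 1)}, j ∈ 𝒩 i → G.Adj i j := by
    intro i j hj
    have hne : i ≠ j := by rintro rfl; exact hself i hj
    exact ⟨hne, Or.inr hj⟩
  obtain ⟨par, hpar⟩ : ∃ par : Fin (N + 1) → Fin (N + 1), ∀ i,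
      ((∃ p, G.Adj i p ∧ G.dist 0 p < G.dist 0 i) →
        G.Adj i (par i) ∧ G.dist 0 (par i) < G.dist 0 i) ∧
      ((¬ ∃ p, G.Adj i p ∧ G.dist 0 p < G.dist 0 i) → par i = i) := by
    refine ⟨fun i => if h : ∃ p, G.Adj i p ∧ G.dist 0 p < G.dist 0 i
      then h.choose else i, fun i => ⟨fun h => ?_, fun h => ?_⟩⟩
    · simp only; rw [dif_pos h]; exact h.choose_spec
    · simp only; rw [dif_neg h]
  have hd : ∀ i, G.dist 0 i ≤ N := by
    intro i
    have := ssa_dist_lt_card htree.isConnected 0 i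
    rwa [Fintype.card_fin, Nat.lt_succ_iff] at this
  have hp : ∀ i, par i ≠ i → G.dist 0 (par i) < G.dist 0 i := by
    intro i hne
    by_cases hex : ∃ p, G.Adj i p ∧ G.dist 0 p < G.dist 0 i
    · exact ((hpar i).1 hex).2
    · exact absurd ((hpar i).2 hex) hne
  have hnbr : ∀ i j, j ∈ 𝒩 i → j = par i ∨ par j = i := by
    intro i j hj
    have hAdj : G.Adj i j := hadj hj
    rcases Nat.lt_trichotomy (G.dist 0 j) (G.dist 0 i) with hlt | heq | hgt
    · left
      have hex : ∃ p, G.Adj i p ∧ G.dist 0 p < G.dist 0 i := ⟨j, hAdj, hlt⟩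
      have hs := (hpar i).1 hex
      exact ssa_parent_unique htree 0 hAdj hs.1 hlt hs.2
    · exact absurd heq.symm (ssa_adj_dist_ne htree 0 hAdj)
    · right
      have hex : ∃ p, G.Adj j p ∧ G.dist 0 p < G.dist 0 j := ⟨i, hAdj.symm, hgt⟩
      have hs := (hpar j).1 hex
      exact (ssa_parent_unique htree 0 hAdj.symm hs.1 hgt hs.2).symm
  obtain ⟨a, hNE⟩ := ssaNE 𝒩 θ B g par (fun i => G.dist 0 i) hd hp hθ hB hCP hself hnbr
  refine ⟨a, fun n m => ?_⟩
  rw [hU, hU]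
  have e1 : (𝒩 n).filter (fun i => Function.update a n m i = Function.update a n m n)
      = (𝒩 n).filter (fun j => a j = m) := by
    apply Finset.filter_congr
    intro j hj
    have hjn : j ≠ n := fun e => hself n (e ▸ hj)
    rw [Function.update_of_ne hjn, Function.update_self]
  rw [e1, Function.update_self]
  exact hNE n m
end

section
/- Consider the spatial spectrum access game on the complete undirected interference graph (𝒩_n = 𝒩∖{n} for all n) with the random backoff mechanism, so that player n's payoff under profile a is U_n(a) = θ_{a_n}·B_{a_n}^n·f(K_{a_n}(a) − 1), where K_m(a) = |{i ∈ 𝒩 : a_i = m}| is the number of players choosing channel m. Define Φ(a) = ∏_{n=1}^N θ_{a_n} B_{a_n}^n · ∏_{m=1}^M ∏_{c=0}^{K_m(a)−1} f(c) (empty products equal 1). Then for every player k, every profile a, and every channel m, with a' = (m, a_{−k}), it holds that ln Φ(a') − ln Φ(a) = ln U_k(a') − ln U_k(a). In particular Φ is an ordinal potential for the game, and the game has a pure Nash equilibrium. -/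
/-- Random backoff on the complete undirected interference graph:
`Φ(a) = ∏ₙ θ_{aₙ} B_{aₙ}ⁿ · ∏ₘ ∏_{c=0}^{Kₘ(a)-1} f(c)` satisfies the exact
log-potential identity for unilateral deviations, hence is an ordinal potential,
and the game has a pure Nash equilibrium. -/
theorem stmt_6 (N M lmax : ℕ) (hl : 2 ≤ lmax)
    (θ : Fin (M + 1) → ℝ) (B : Fin (M + 1) → Fin (N + 1) → ℝ)
    (hθ : ∀ m, 0 < θ m ∧ θ m < 1)
    (hB : ∀ m n, 0 < B m n)
    -- random backoff channel grabbing probability with c same-channel interferers: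
    (f : ℕ → ℝ)
    (hf : ∀ c, f c = ∑ l ∈ Finset.Icc 1 lmax,
      (1 / (lmax : ℝ)) * (((lmax : ℝ) - (l : ℝ)) / (lmax : ℝ)) ^ c)
    -- number of players choosing channel m:
    (K : Fin (M + 1) → (Fin (N + 1) → Fin (M + 1)) → ℕ)
    (hK : ∀ m a, K m a = (Finset.univ.filter (fun i => a i = m)).card)
    -- payoff on the complete graph (each player has K(aₙ, a) − 1 interferers):
    (U : (Fin (N + 1) → Fin (M + 1)) → Fin (N + 1) → ℝ)
    (hU : ∀ a n, U a n = θ (a n) * B (a n) n * f (K (a n) a - 1))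
    (Φ : (Fin (N + 1) → Fin (M + 1)) → ℝ)
    (hΦ : ∀ a, Φ a = (∏ n, θ (a n) * B (a n) n) *
      ∏ m, ∏ c ∈ Finset.range (K m a), f c) :
    (∀ (k : Fin (N + 1)) (a : Fin (N + 1) → Fin (M + 1)) (m : Fin (M + 1)),
      Real.log (Φ (Function.update a k m)) - Real.log (Φ a) =
        Real.log (U (Function.update a k m) k) - Real.log (U a k)) ∧
    (∀ (n : Fin (N + 1)) (a : Fin (N + 1) → Fin (M + 1)) (m : Fin (M + 1)),
      Real.sign (Φ (Function.update a n m) - Φ a) =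
        Real.sign (U (Function.update a n m) n - U a n)) ∧
    ∃ a : Fin (N + 1) → Fin (M + 1), ∀ (n : Fin (N + 1)) (m : Fin (M + 1)),
      U (Function.update a n m) n ≤ U a n := by
  -- positivity of f
  have hlm : (0:ℝ) < lmax := by exact_mod_cast (by omega : 0 < lmax)
  have hfpos : ∀ c, 0 < f c := by
    intro c
    rw [hf]
    apply Finset.sum_pos'
    · intro l hl
      have hle : l ≤ lmax := (Finset.mem_Icc.mp hl).2
      have hnn : (0:ℝ) ≤ ((lmax:ℝ) - l) / lmax := by
        apply div_nonneg _ hlm.le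
        have : (l:ℝ) ≤ lmax := by exact_mod_cast hle
        linarith
      exact mul_nonneg (by positivity) (pow_nonneg hnn c)
    · refine ⟨1, Finset.mem_Icc.mpr ⟨le_refl 1, by omega⟩, ?_⟩
      have h1 : (0:ℝ) < ((lmax:ℝ) - ((1:ℕ):ℝ)) / lmax := by
        apply div_pos _ hlm
        have : (2:ℝ) ≤ lmax := by exact_mod_cast hl
        push_cast
        linarith
      exact mul_pos (one_div_pos.mpr hlm) (pow_pos h1 c)
  have hUpos : ∀ a n, 0 < U a n := by
    intro a n; rw [hU]
    exact mul_pos (mul_pos (hθ _).1 (hB _ _)) (hfpos _)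
  have hΦpos : ∀ a, 0 < Φ a := by
    intro a; rw [hΦ]
    apply mul_pos
    · exact Finset.prod_pos fun n _ => mul_pos (hθ _).1 (hB _ _)
    · exact Finset.prod_pos fun m _ => Finset.prod_pos fun c _ => hfpos c
  -- the key cross-multiplied ratio identity
  have hcross : ∀ (k : Fin (N + 1)) (a : Fin (N + 1) → Fin (M + 1)) (m : Fin (M + 1)),
      Φ (Function.update a k m) * U a k = Φ a * U (Function.update a k m) k := by
    intro k a m
    by_cases hm : m = a k
    · subst hm
      rw [Function.update_eq_self]
    · set a' := Function.update a k m with ha'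
      -- counting facts
      have hK1 : K m a' = K m a + 1 := by
        rw [hK, hK]
        have hset : (Finset.univ.filter (fun i => a' i = m)) =
            insert k (Finset.univ.filter (fun i => a i = m)) := by
          ext i
          by_cases hik : i = k
          · subst hik
            simp [ha', Function.update_self, (Ne.symm hm)]
          · simp [ha', Function.update_of_ne hik, hik]
        rw [hset, Finset.card_insert_of_notMem (by simp [Ne.symm hm])]
      have hK2 : K (a k) a' + 1 = K (a k) a := by
        rw [hK, hK]
        have hset : (Finset.univ.filter (fun i => a' i = a k)) =
            (Finset.univ.filter (fun i => a i = a k)).erase k := by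
          ext i
          by_cases hik : i = k
          · subst hik
            simp [ha', Function.update_self, hm]
          · simp [ha', Function.update_of_ne hik, hik]
        have hkmem : k ∈ Finset.univ.filter (fun i => a i = a k) := by simp
        rw [hset, Finset.card_erase_of_mem hkmem]
        have := Finset.card_pos.mpr ⟨k, hkmem⟩
        omega
      have hK3 : ∀ m', m' ≠ m → m' ≠ a k → K m' a' = K m' a := by
        intro m' h1 h2
        rw [hK, hK]
        congr 1
        ext i
        by_cases hik : i = k
        · subst hik
          simp [ha', Function.update_self, Ne.symm h1, Ne.symm h2]
        · simp [ha', Function.update_of_ne hik]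
      -- player product split
      have hpl' : (∏ n, θ (a' n) * B (a' n) n) =
          (θ m * B m k) * ∏ n ∈ Finset.univ.erase k, θ (a n) * B (a n) n := by
        rw [← Finset.mul_prod_erase Finset.univ _ (Finset.mem_univ k)]
        congr 1
        · simp [ha']
        · exact Finset.prod_congr rfl fun n hn => by
            rw [ha', Function.update_of_ne (Finset.mem_erase.mp hn).1]
      have hpl : (∏ n, θ (a n) * B (a n) n) =
          (θ (a k) * B (a k) k) * ∏ n ∈ Finset.univ.erase k, θ (a n) * B (a n) n := by
        rw [← Finset.mul_prod_erase Finset.univ _ (Finset.mem_univ k)]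
      -- channel product split
      have hak : a k ∈ (Finset.univ.erase m) :=
        Finset.mem_erase.mpr ⟨Ne.symm hm, Finset.mem_univ _⟩
      have hsplit : ∀ x : Fin (N + 1) → Fin (M + 1),
          (∏ m', ∏ c ∈ Finset.range (K m' x), f c) =
          (∏ c ∈ Finset.range (K m x), f c) *
          ((∏ c ∈ Finset.range (K (a k) x), f c) *
            ∏ m' ∈ (Finset.univ.erase m).erase (a k), ∏ c ∈ Finset.range (K m' x), f c) := by
        intro x
        rw [Finset.mul_prod_erase (Finset.univ.erase m)
            (fun m' => ∏ c ∈ Finset.range (K m' x), f c) hak,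
          Finset.mul_prod_erase Finset.univ
            (fun m' => ∏ c ∈ Finset.range (K m' x), f c) (Finset.mem_univ m)]
      have hrest : (∏ m' ∈ (Finset.univ.erase m).erase (a k), ∏ c ∈ Finset.range (K m' a'), f c)
          = ∏ m' ∈ (Finset.univ.erase m).erase (a k), ∏ c ∈ Finset.range (K m' a), f c := by
        refine Finset.prod_congr rfl fun m' hm' => ?_
        obtain ⟨h2, h1⟩ := Finset.mem_erase.mp hm'
        rw [hK3 m' (Finset.mem_erase.mp h1).1 h2]
      have hchan : f (K (a k) a - 1) * ∏ m', ∏ c ∈ Finset.range (K m' a'), f c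
          = f (K m a) * ∏ m', ∏ c ∈ Finset.range (K m' a), f c := by
        rw [hsplit a', hsplit a, hrest, hK1, Finset.prod_range_succ, ← hK2,
          Finset.prod_range_succ]
        simp only [Nat.add_sub_cancel]
        ring
      -- U facts
      have hUa : U a k = θ (a k) * B (a k) k * f (K (a k) a - 1) := hU a k
      have hUa' : U a' k = θ m * B m k * f (K m a) := by
        rw [hU]
        have h1 : a' k = m := Function.update_self k m a
        rw [h1, hK1]
        simp
      rw [hΦ, hΦ, hUa, hUa', hpl, hpl']
      set T := ∏ n ∈ Finset.univ.erase k, θ (a n) * B (a n) n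
      linear_combination (θ m * B m k * T * (θ (a k) * B (a k) k)) * hchan
  refine ⟨?_, ?_, ?_⟩
  · intro k a m
    have h := hcross k a m
    have e1 : Real.log (Φ (Function.update a k m) * U a k)
        = Real.log (Φ a * U (Function.update a k m) k) := by rw [h]
    rw [Real.log_mul (hΦpos _).ne' (hUpos _ _).ne',
      Real.log_mul (hΦpos _).ne' (hUpos _ _).ne'] at e1
    linarith
  · intro n a m
    have h := hcross n a m
    have key : (Φ (Function.update a n m) - Φ a) * U a n
        = Φ a * (U (Function.update a n m) n - U a n) := by linear_combination h
    rcases lt_trichotomy (U (Function.update a n m) n) (U a n) with hlt | heq | hgt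
    · have h2 : U (Function.update a n m) n - U a n < 0 := by linarith
      have h1 : Φ (Function.update a n m) - Φ a < 0 := by
        nlinarith [hΦpos a, hUpos a n]
      rw [Real.sign_of_neg h1, Real.sign_of_neg h2]
    · have h2 : U (Function.update a n m) n - U a n = 0 := by linarith
      have h1 : Φ (Function.update a n m) - Φ a = 0 := by
        rcases mul_eq_zero.mp (by rw [key, h2, mul_zero]) with h' | h'
        · exact h'
        · exact absurd h' (hUpos a n).ne'
      rw [h1, h2]
    · have h2 : 0 < U (Function.update a n m) n - U a n := by linarith
      have h1 : 0 < Φ (Function.update a n m) - Φ a := by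
        nlinarith [hΦpos a, hUpos a n]
      rw [Real.sign_of_pos h1, Real.sign_of_pos h2]
  · obtain ⟨a, ha⟩ := Finite.exists_max Φ
    refine ⟨a, fun n m => ?_⟩
    have h := hcross n a m
    have hle : Φ (Function.update a n m) ≤ Φ a := ha _
    have : Φ a * U (Function.update a n m) n ≤ Φ a * U a n := by
      rw [← h]
      exact mul_le_mul_of_nonneg_right hle (hUpos a n).le
    exact le_of_mul_le_mul_left this (hΦpos a)
end

section
/- Consider a spatial spectrum access game on an undirected interference graph with user-specific transmission gains h_n > 0, common channel data rates B_m > 0, and the random backoff mechanism, so that player n's payoff under profile a is U_n(a) = h_n·θ_{a_n}·B_{a_n}·f(K_n^{a_n}(a)), where K_n^m(a) = |{i ∈ 𝒩_n : a_i = m}|. If the undirected interference graph is a complete bipartite graph (the players partition into two disjoint sets 𝒱_1, 𝒱_2 such that every player of 𝒱_1 is adjacent to every player of 𝒱_2 and there are no edges within either set) or a regular bipartite graph (a bipartite graph in which every player has the same degree), then the game has a pure Nash equilibrium. -/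
/-- Random backoff spatial spectrum access game with user-specific transmission gains
on a complete bipartite or regular bipartite undirected interference graph has a
pure Nash equilibrium. -/
theorem stmt_7 (N M lmax : ℕ) (hl : 2 ≤ lmax)
    (𝒩 : Fin (N + 1) → Finset (Fin (N + 1)))
    (hself : ∀ n, n ∉ 𝒩 n)
    -- undirected interference graph:
    (hsym : ∀ i j, i ∈ 𝒩 j ↔ j ∈ 𝒩 i)
    (θ : Fin (M + 1) → ℝ) (hθ : ∀ m, 0 < θ m ∧ θ m < 1)
    (B : Fin (M + 1) → ℝ) (hB : ∀ m, 0 < B m)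
    (h : Fin (N + 1) → ℝ) (hh : ∀ n, 0 < h n)
    -- random backoff channel grabbing probability with c same-channel interferers:
    (f : ℕ → ℝ)
    (hf : ∀ c, f c = ∑ l ∈ Finset.Icc 1 lmax,
      (1 / (lmax : ℝ)) * (((lmax : ℝ) - (l : ℝ)) / (lmax : ℝ)) ^ c)
    (U : (Fin (N + 1) → Fin (M + 1)) → Fin (N + 1) → ℝ)
    (hU : ∀ a n, U a n = h n * θ (a n) * B (a n) *
      f (((𝒩 n).filter (fun i => a i = a n)).card))
    -- the graph is complete bipartite or regular bipartite:
    (hbip :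
      (∃ V1 V2 : Finset (Fin (N + 1)), Disjoint V1 V2 ∧ V1 ∪ V2 = Finset.univ ∧
        ∀ i j, i ∈ 𝒩 j ↔ ((i ∈ V1 ∧ j ∈ V2) ∨ (i ∈ V2 ∧ j ∈ V1))) ∨
      (∃ V1 V2 : Finset (Fin (N + 1)), Disjoint V1 V2 ∧ V1 ∪ V2 = Finset.univ ∧
        (∀ i j, i ∈ 𝒩 j → ((i ∈ V1 ∧ j ∈ V2) ∨ (i ∈ V2 ∧ j ∈ V1))) ∧
        ∃ D : ℕ, ∀ n, (𝒩 n).card = D)) :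
    ∃ a : Fin (N + 1) → Fin (M + 1), ∀ (n : Fin (N + 1)) (m : Fin (M + 1)),
      U (Function.update a n m) n ≤ U a n := by
  classical
  have hlpos : 0 < lmax := by omega
  have hlR : (0 : ℝ) < lmax := by exact_mod_cast hlpos
  -- basic facts about f
  have hterm : ∀ l ∈ Finset.Icc 1 lmax,
      0 ≤ ((lmax : ℝ) - l) / lmax ∧ ((lmax : ℝ) - l) / lmax ≤ 1 := by
    intro l hl'
    rw [Finset.mem_Icc] at hl'
    have h2 : (l : ℝ) ≤ lmax := by exact_mod_cast hl'.2
    have h0 : (0 : ℝ) ≤ l := by positivity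
    constructor
    · apply div_nonneg _ hlR.le; linarith
    · rw [div_le_one hlR]; linarith
  have hf0 : f 0 = 1 := by
    rw [hf]
    simp only [pow_zero, mul_one, Finset.sum_const, Nat.card_Icc, nsmul_eq_mul]
    have : (lmax + 1 - 1 : ℕ) = lmax := by omega
    rw [this]
    field_simp
  have hfnn : ∀ c, 0 ≤ f c := by
    intro c
    rw [hf]
    apply Finset.sum_nonneg
    intro l hl'
    have := (hterm l hl').1
    positivity
  have hfle : ∀ c, f c ≤ 1 := by
    intro c
    rw [hf]
    calc ∑ l ∈ Finset.Icc 1 lmax, (1 / (lmax : ℝ)) * (((lmax : ℝ) - l) / lmax) ^ c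
        ≤ ∑ l ∈ Finset.Icc 1 lmax, (1 / (lmax : ℝ)) := by
          apply Finset.sum_le_sum
          intro l hl'
          have ht := hterm l hl'
          calc (1 / (lmax : ℝ)) * (((lmax : ℝ) - l) / lmax) ^ c
              ≤ (1 / (lmax : ℝ)) * 1 :=
                mul_le_mul_of_nonneg_left (pow_le_one₀ ht.1 ht.2) (by positivity)
            _ = 1 / (lmax : ℝ) := mul_one _
      _ = 1 := by
          simp only [Finset.sum_const, Nat.card_Icc, nsmul_eq_mul]
          have : (lmax + 1 - 1 : ℕ) = lmax := by omega
          rw [this]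
          field_simp
  -- rewriting the utility of a deviation
  have hUdev : ∀ (a : Fin (N + 1) → Fin (M + 1)) (n : Fin (N + 1)) (m : Fin (M + 1)),
      U (Function.update a n m) n
        = h n * θ m * B m * f (((𝒩 n).filter (fun i => a i = m)).card) := by
    intro a n m
    have h2 : (𝒩 n).filter (fun i => Function.update a n m i = m)
        = (𝒩 n).filter (fun i => a i = m) := by
      apply Finset.filter_congr
      intro i hi
      have hne : i ≠ n := ne_of_mem_of_not_mem hi (hself n)
      simp [Function.update_of_ne hne]
    rw [hU]
    simp only [Function.update_self]
    rw [h2]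
  -- reduce Nash condition to an inequality about θ·B·f
  have reduce : ∀ (a : Fin (N + 1) → Fin (M + 1)) (n : Fin (N + 1)) (m : Fin (M + 1)),
      θ m * B m * f (((𝒩 n).filter (fun i => a i = m)).card)
        ≤ θ (a n) * B (a n) * f (((𝒩 n).filter (fun i => a i = a n)).card) →
      U (Function.update a n m) n ≤ U a n := by
    intro a n m hle
    rw [hUdev, hU]
    have h2 := mul_le_mul_of_nonneg_left hle (hh n).le
    calc h n * θ m * B m * f (((𝒩 n).filter (fun i => a i = m)).card)
        = h n * (θ m * B m * f (((𝒩 n).filter (fun i => a i = m)).card)) := by ring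
      _ ≤ h n * (θ (a n) * B (a n) * f (((𝒩 n).filter (fun i => a i = a n)).card)) := h2
      _ = h n * θ (a n) * B (a n) * f (((𝒩 n).filter (fun i => a i = a n)).card) := by ring
  -- counting lemmas
  have cnt_all : ∀ (S : Finset (Fin (N + 1))) (a : Fin (N + 1) → Fin (M + 1)) (m : Fin (M + 1)),
      (∀ i ∈ S, a i = m) → (S.filter (fun i => a i = m)).card = S.card := by
    intro S a m hall
    rw [Finset.filter_true_of_mem hall]
  have cnt_none : ∀ (S : Finset (Fin (N + 1))) (a : Fin (N + 1) → Fin (M + 1))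
      (m m' : Fin (M + 1)), m ≠ m' → (∀ i ∈ S, a i = m') →
      (S.filter (fun i => a i = m)).card = 0 := by
    intro S a m m' hne hall
    rw [Finset.filter_false_of_mem, Finset.card_empty]
    intro i hi
    rw [hall i hi]
    exact fun hc => hne hc.symm
  -- best channel
  obtain ⟨m1, hm1⟩ := Finite.exists_max (fun m : Fin (M + 1) => θ m * B m)
  rcases Nat.eq_zero_or_pos M with hM | hM
  · -- single channel, trivial
    subst hM
    refine ⟨fun _ => m1, ?_⟩
    intro n m
    have hmm : m = (fun _ => m1) n := by
      have h1 := m.isLt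
      have h2 := m1.isLt
      exact Fin.ext (by omega)
    rw [hmm, Function.update_eq_self]
  -- second best channel
  have hex2 : ∃ m : Fin (M + 1), m ≠ m1 := by
    have : 1 < Fintype.card (Fin (M + 1)) := by simp; omega
    exact Fintype.exists_ne_of_one_lt_card this m1
  obtain ⟨m2, hm2mem, hm2max⟩ :=
    Finset.exists_max_image (Finset.univ.erase m1) (fun m => θ m * B m)
      ⟨hex2.choose, Finset.mem_erase.2 ⟨hex2.choose_spec, Finset.mem_univ _⟩⟩
  have hm2ne : m2 ≠ m1 := (Finset.mem_erase.1 hm2mem).1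
  have hm2' : ∀ m, m ≠ m1 → θ m * B m ≤ θ m2 * B m2 := fun m hm =>
    hm2max m (Finset.mem_erase.2 ⟨hm, Finset.mem_univ m⟩)
  -- two-channel equilibrium construction
  have twoChan : ∀ W1 W2 : Finset (Fin (N + 1)), Disjoint W1 W2 →
      (∀ i j, i ∈ 𝒩 j → ((i ∈ W1 ∧ j ∈ W2) ∨ (i ∈ W2 ∧ j ∈ W1))) →
      (∀ n ∈ W2, θ m1 * B m1 * f ((𝒩 n).card) ≤ θ m2 * B m2) →
      ∃ a : Fin (N + 1) → Fin (M + 1), ∀ (n : Fin (N + 1)) (m : Fin (M + 1)),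
        U (Function.update a n m) n ≤ U a n := by
    intro W1 W2 hdisj hsub hdev
    refine ⟨fun i => if i ∈ W2 then m2 else m1, ?_⟩
    intro n m
    set a : Fin (N + 1) → Fin (M + 1) := fun i => if i ∈ W2 then m2 else m1 with ha
    apply reduce
    by_cases hn : n ∈ W2
    · -- n ∈ W2 : all its neighbors are in W1, playing m1; n plays m2
      have han : a n = m2 := if_pos hn
      have hnb : ∀ i ∈ 𝒩 n, a i = m1 := by
        intro i hi
        have hiW1 : i ∈ W1 := by
          rcases hsub i n hi with ⟨h1, _⟩ | ⟨_, hnW1⟩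
          · exact h1
          · exact absurd hn (Finset.disjoint_left.1 hdisj hnW1)
        have : i ∉ W2 := Finset.disjoint_left.1 hdisj hiW1
        simp only [ha, if_neg this]
      have hcur : ((𝒩 n).filter (fun i => a i = a n)).card = 0 := by
        rw [han]
        exact cnt_none _ _ _ _ hm2ne hnb
      rw [hcur, hf0, mul_one, han]
      by_cases hm : m = m1
      · subst hm
        rw [cnt_all _ _ _ hnb]
        exact hdev n hn
      · rw [cnt_none _ _ _ _ hm hnb, hf0, mul_one]
        exact hm2' m hm
    · -- n ∉ W2 : n plays the globally best channel uncontested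
      have han : a n = m1 := if_neg hn
      have hnb : ∀ i ∈ 𝒩 n, a i = m2 := by
        intro i hi
        have hiW2 : i ∈ W2 := by
          rcases hsub i n hi with ⟨_, h2⟩ | ⟨h2, _⟩
          · exact absurd h2 hn
          · exact h2
        simp only [ha, if_pos hiW2]
      have hcur : ((𝒩 n).filter (fun i => a i = a n)).card = 0 := by
        rw [han]
        exact cnt_none _ _ _ _ hm2ne.symm hnb
      rw [hcur, hf0, mul_one, han]
      have hθB1 : 0 ≤ θ m1 * B m1 := (mul_pos (hθ m1).1 (hB m1)).le
      calc θ m * B m * f (((𝒩 n).filter (fun i => a i = m)).card)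
          ≤ (θ m1 * B m1) * 1 := by
            apply mul_le_mul (hm1 m) (hfle _) (hfnn _) hθB1
        _ = θ m1 * B m1 := mul_one _
  -- everybody-on-the-best-channel equilibrium construction
  have oneChan : (∀ n, θ m2 * B m2 ≤ θ m1 * B m1 * f ((𝒩 n).card)) →
      ∃ a : Fin (N + 1) → Fin (M + 1), ∀ (n : Fin (N + 1)) (m : Fin (M + 1)),
        U (Function.update a n m) n ≤ U a n := by
    intro hall
    refine ⟨fun _ => m1, ?_⟩
    intro n m
    apply reduce
    by_cases hm : m = m1
    · subst hm
      exact le_rfl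
    · have hcur : ((𝒩 n).filter (fun _ : Fin (N + 1) => m1 = m1)).card = (𝒩 n).card := by
        rw [Finset.filter_true_of_mem (fun i _ => rfl)]
      have h0 : ((𝒩 n).filter (fun _ : Fin (N + 1) => m1 = m)).card = 0 := by
        rw [Finset.filter_false_of_mem (fun i _ hc => hm hc.symm), Finset.card_empty]
      rw [hcur, h0, hf0, mul_one]
      exact le_trans (hm2' m hm) (hall n)
  rcases hbip with ⟨V1, V2, hd, hc, hiff⟩ | ⟨V1, V2, hd, hc, hsub, D, hD⟩
  · -- complete bipartite
    have hsub1 : ∀ i j, i ∈ 𝒩 j → ((i ∈ V1 ∧ j ∈ V2) ∨ (i ∈ V2 ∧ j ∈ V1)) :=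
      fun i j hij => (hiff i j).1 hij
    have hNeq1 : ∀ n ∈ V1, 𝒩 n = V2 := by
      intro n hn
      have hn2 : n ∉ V2 := Finset.disjoint_left.1 hd hn
      ext i
      rw [hiff]
      constructor
      · rintro (⟨_, h2⟩ | ⟨h2, _⟩)
        · exact absurd h2 hn2
        · exact h2
      · intro hi
        exact Or.inr ⟨hi, hn⟩
    have hNeq2 : ∀ n ∈ V2, 𝒩 n = V1 := by
      intro n hn
      have hn1 : n ∉ V1 := Finset.disjoint_right.1 hd hn
      ext i
      rw [hiff]
      constructor
      · rintro (⟨h2, _⟩ | ⟨_, h2⟩)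
        · exact h2
        · exact absurd h2 hn1
      · intro hi
        exact Or.inl ⟨hi, hn⟩
    by_cases hA : θ m1 * B m1 * f V1.card ≤ θ m2 * B m2
    · exact twoChan V1 V2 hd hsub1 (fun n hn => by rw [hNeq2 n hn]; exact hA)
    · by_cases hB2 : θ m1 * B m1 * f V2.card ≤ θ m2 * B m2
      · refine twoChan V2 V1 hd.symm (fun i j hij => (hsub1 i j hij).symm) ?_
        intro n hn
        rw [hNeq1 n hn]
        exact hB2
      · apply oneChan
        intro n
        have hn : n ∈ V1 ∨ n ∈ V2 := by
          have := Finset.mem_univ n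
          rw [← hc, Finset.mem_union] at this
          exact this
        rcases hn with hn | hn
        · rw [hNeq1 n hn]
          exact (not_le.1 hB2).le
        · rw [hNeq2 n hn]
          exact (not_le.1 hA).le
  · -- regular bipartite
    by_cases hA : θ m1 * B m1 * f D ≤ θ m2 * B m2
    · exact twoChan V1 V2 hd hsub (fun n _ => by rw [hD n]; exact hA)
    · apply oneChan
      intro n
      rw [hD n]
      exact (not_le.1 hA).le
end

section
/- Consider a spatial spectrum access game on an arbitrary undirected interference graph with user-specific transmission gains h_n > 0, common channel data rates B_m > 0, and the asymptotic random backoff mechanism, so that player n's payoff under profile a is U_n(a) = h_n·θ_{a_n}·B_{a_n}·1/(1 + K_n^{a_n}(a)), where K_n^m(a) = |{i ∈ 𝒩_n : a_i = m}|. Then Φ(a) = −Σ_{n=1}^N (1 + (1/2)·K_n^{a_n}(a)) / (θ_{a_n}·B_{a_n}) is an ordinal potential for the game, and consequently the game has a pure Nash equilibrium. -/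
lemma sign_congr' {s t : ℝ} (h1 : 0 < s ↔ 0 < t) (h2 : s = 0 ↔ t = 0) :
    Real.sign s = Real.sign t := by
  rcases lt_trichotomy s 0 with hs | hs | hs
  · have ht : t < 0 := by
      rcases lt_trichotomy t 0 with h | h | h
      · exact h
      · exact absurd (h2.mpr h) (ne_of_lt hs)
      · exact absurd (h1.mpr h) (not_lt.mpr hs.le)
    rw [Real.sign_of_neg hs, Real.sign_of_neg ht]
  · rw [hs, h2.mp hs, Real.sign_zero]
  · rw [Real.sign_of_pos hs, Real.sign_of_pos (h1.mp hs)]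

/-- Asymptotic random backoff (equal channel sharing) on an arbitrary undirected
interference graph: `Φ(a) = −Σₙ (1 + Kₙ/2)/(θ_{aₙ} B_{aₙ})` is an ordinal potential,
and the game has a pure Nash equilibrium. -/
theorem stmt_8 (N M : ℕ)
    (𝒩 : Fin (N + 1) → Finset (Fin (N + 1)))
    (hself : ∀ n, n ∉ 𝒩 n)
    -- undirected interference graph:
    (hsym : ∀ i j, i ∈ 𝒩 j ↔ j ∈ 𝒩 i)
    (θ : Fin (M + 1) → ℝ) (hθ : ∀ m, 0 < θ m ∧ θ m < 1)
    (B : Fin (M + 1) → ℝ) (hB : ∀ m, 0 < B m)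
    (h : Fin (N + 1) → ℝ) (hh : ∀ n, 0 < h n)
    -- number of interferers of player n choosing channel m:
    (K : Fin (N + 1) → Fin (M + 1) → (Fin (N + 1) → Fin (M + 1)) → ℕ)
    (hK : ∀ n m a, K n m a = ((𝒩 n).filter (fun i => a i = m)).card)
    (U : (Fin (N + 1) → Fin (M + 1)) → Fin (N + 1) → ℝ)
    (hU : ∀ a n, U a n = h n * θ (a n) * B (a n) * (1 / (1 + (K n (a n) a : ℝ))))
    (Φ : (Fin (N + 1) → Fin (M + 1)) → ℝ)
    (hΦ : ∀ a, Φ a = -∑ n, (1 + (1 / 2) * (K n (a n) a : ℝ)) / (θ (a n) * B (a n))) :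
    (∀ (n : Fin (N + 1)) (a : Fin (N + 1) → Fin (M + 1)) (m : Fin (M + 1)),
      Real.sign (Φ (Function.update a n m) - Φ a) =
        Real.sign (U (Function.update a n m) n - U a n)) ∧
    ∃ a : Fin (N + 1) → Fin (M + 1), ∀ (n : Fin (N + 1)) (m : Fin (M + 1)),
      U (Function.update a n m) n ≤ U a n := by
  -- cast of K as an indicator sum
  have hKR : ∀ (i : Fin (N+1)) (t : Fin (M+1)) (b : Fin (N+1) → Fin (M+1)),
      (K i t b : ℝ) = ∑ j ∈ 𝒩 i, (if b j = t then (1:ℝ) else 0) := by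
    intro i t b
    rw [hK, Finset.card_filter]
    push_cast
    rfl
  have hθB : ∀ m : Fin (M+1), θ m * B m ≠ 0 := fun m =>
    ne_of_gt (mul_pos (hθ m).1 (hB m))
  -- K is unchanged for players not adjacent to n (including n itself)
  have hKsame : ∀ (n : Fin (N+1)) (a : Fin (N+1) → Fin (M+1)) (m : Fin (M+1))
      (i : Fin (N+1)) (t : Fin (M+1)), n ∉ 𝒩 i →
      (K i t (Function.update a n m) : ℝ) = K i t a := by
    intro n a m i t hni
    rw [hKR, hKR]
    refine Finset.sum_congr rfl fun j hj => ?_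
    rw [Function.update_of_ne (by rintro rfl; exact hni hj)]
  -- the key potential computation
  have key : ∀ (n : Fin (N+1)) (a : Fin (N+1) → Fin (M+1)) (m : Fin (M+1)),
      Φ (Function.update a n m) - Φ a =
        (1 + (K n (a n) a : ℝ)) / (θ (a n) * B (a n)) -
        (1 + (K n m a : ℝ)) / (θ m * B m) := by
    intro n a m
    set a' := Function.update a n m with ha'def
    have ha'n : a' n = m := Function.update_self n m a
    have ha'i : ∀ i, i ≠ n → a' i = a i := fun i hi => Function.update_of_ne hi m a
    have hKn : ∀ t, (K n t a' : ℝ) = K n t a := fun t => hKsame n a m n t (hself n)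
    have hKi : ∀ (i : Fin (N+1)) (t : Fin (M+1)), n ∈ 𝒩 i →
        (K i t a' : ℝ) = (K i t a : ℝ) + (if m = t then 1 else 0)
          - (if a n = t then 1 else 0) := by
      intro i t hmem
      rw [hKR, hKR, ← Finset.add_sum_erase _ _ hmem, ← Finset.add_sum_erase _ _ hmem]
      have he : ∑ j ∈ (𝒩 i).erase n, (if a' j = t then (1:ℝ) else 0) =
          ∑ j ∈ (𝒩 i).erase n, (if a j = t then (1:ℝ) else 0) :=
        Finset.sum_congr rfl fun j hj => by rw [ha'i j (Finset.ne_of_mem_erase hj)]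
      rw [he, ha'n]
      ring
    rw [hΦ, hΦ, neg_sub_neg, ← Finset.sum_sub_distrib,
      ← Finset.add_sum_erase _ _ (Finset.mem_univ n)]
    -- the sum over the other players
    have hrest : ∑ i ∈ Finset.univ.erase n,
        ((1 + (1/2) * (K i (a i) a : ℝ)) / (θ (a i) * B (a i)) -
         (1 + (1/2) * (K i (a' i) a' : ℝ)) / (θ (a' i) * B (a' i))) =
        (K n (a n) a : ℝ) * ((1/2) / (θ (a n) * B (a n))) -
        (K n m a : ℝ) * ((1/2) / (θ m * B m)) := by
      have step : ∀ i ∈ Finset.univ.erase n,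
          ((1 + (1/2) * (K i (a i) a : ℝ)) / (θ (a i) * B (a i)) -
           (1 + (1/2) * (K i (a' i) a' : ℝ)) / (θ (a' i) * B (a' i))) =
          (if i ∈ 𝒩 n then
            ((if a n = a i then (1:ℝ) else 0) * ((1/2) / (θ (a i) * B (a i))) -
             (if m = a i then (1:ℝ) else 0) * ((1/2) / (θ (a i) * B (a i)))) else 0) := by
        intro i hi
        have hin : i ≠ n := Finset.ne_of_mem_erase hi
        rw [ha'i i hin]
        by_cases hmem : i ∈ 𝒩 n
        · rw [if_pos hmem, hKi i (a i) ((hsym n i).mpr hmem)]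
          ring
        · rw [if_neg hmem, hKsame n a m i (a i) (fun hc => hmem ((hsym n i).mp hc))]
          ring
      rw [Finset.sum_congr rfl step, Finset.sum_ite_mem]
      have hinter : Finset.univ.erase n ∩ 𝒩 n = 𝒩 n := by
        ext i
        simp only [Finset.mem_inter, Finset.mem_erase, Finset.mem_univ, and_true, true_and]
        exact ⟨fun ⟨_, hi⟩ => hi, fun hi => ⟨fun hc => hself n (hc ▸ hi), hi⟩⟩
      rw [hinter, Finset.sum_sub_distrib]
      have hsumind : ∀ t : Fin (M+1),
          ∑ i ∈ 𝒩 n, (if t = a i then (1:ℝ) else 0) * ((1/2) / (θ (a i) * B (a i))) =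
          (K n t a : ℝ) * ((1/2) / (θ t * B t)) := by
        intro t
        rw [hKR, Finset.sum_mul]
        refine Finset.sum_congr rfl fun i _ => ?_
        by_cases hit : a i = t
        · rw [hit]
        · rw [if_neg (fun hc => hit hc.symm), if_neg hit, zero_mul, zero_mul]
      rw [hsumind (a n), hsumind m]
    rw [hrest, ha'n, hKn m]
    field_simp
    ring
  -- sign of the utility difference
  have ukey : ∀ (n : Fin (N+1)) (a : Fin (N+1) → Fin (M+1)) (m : Fin (M+1)),
      U (Function.update a n m) n - U a n =
        h n * (θ m * B m * (1 / (1 + (K n m a : ℝ))) -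
               θ (a n) * B (a n) * (1 / (1 + (K n (a n) a : ℝ)))) := by
    intro n a m
    rw [hU, hU, Function.update_self, hKsame n a m n m (hself n)]
    ring
  have signs : ∀ (n : Fin (N + 1)) (a : Fin (N + 1) → Fin (M + 1)) (m : Fin (M + 1)),
      Real.sign (Φ (Function.update a n m) - Φ a) =
        Real.sign (U (Function.update a n m) n - U a n) := by
    intro n a m
    rw [key, ukey]
    set x := θ m * B m with hx
    set y := θ (a n) * B (a n) with hy
    set p := 1 + (K n m a : ℝ) with hp
    set q := 1 + (K n (a n) a : ℝ) with hq
    have hxp : 0 < x := mul_pos (hθ m).1 (hB m)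
    have hyp : 0 < y := mul_pos (hθ (a n)).1 (hB (a n))
    have hpp : 0 < p := by positivity
    have hqp : 0 < q := by positivity
    have e2 : q / y - p / x = (q * x - p * y) / (x * y) := by
      field_simp
    have e3 : h n * (x * (1 / p) - y * (1 / q)) = h n * ((q * x - p * y) / (p * q)) := by
      have hp0 : p ≠ 0 := ne_of_gt hpp
      have hq0 : q ≠ 0 := ne_of_gt hqp
      rw [mul_eq_mul_left_iff]
      left
      field_simp
    rw [e2, e3]
    set D := q * x - p * y with hD
    have hxy : 0 < x * y := mul_pos hxp hyp
    have hpq : 0 < p * q := mul_pos hpp hqp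
    have l1 : ∀ c : ℝ, 0 < c → (0 < D / c ↔ 0 < D) := by
      intro c hc
      constructor
      · intro hd
        have := mul_pos hd hc
        rwa [div_mul_cancel₀ _ (ne_of_gt hc)] at this
      · intro hd; exact div_pos hd hc
    apply sign_congr'
    · rw [l1 _ hxy]
      constructor
      · intro hd
        exact mul_pos (hh n) ((l1 _ hpq).mpr hd)
      · intro hd
        rcases mul_pos_iff.mp hd with ⟨_, h2⟩ | ⟨h1, _⟩
        · exact (l1 _ hpq).mp h2
        · exact absurd (hh n) (not_lt.mpr h1.le)
    · rw [div_eq_zero_iff, or_iff_left (ne_of_gt hxy), mul_eq_zero,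
        or_iff_right (ne_of_gt (hh n)), div_eq_zero_iff, or_iff_left (ne_of_gt hpq)]
  refine ⟨signs, ?_⟩
  obtain ⟨a, ha⟩ := Finite.exists_max Φ
  refine ⟨a, fun n m => ?_⟩
  by_contra hc
  push_neg at hc
  have h1 : Real.sign (U (Function.update a n m) n - U a n) = 1 :=
    Real.sign_of_pos (by linarith)
  have h2 : Real.sign (Φ (Function.update a n m) - Φ a) = 1 := by
    rw [signs]; exact h1
  have h3 : 0 < Φ (Function.update a n m) - Φ a := by
    by_contra h4
    push_neg at h4
    rcases lt_or_eq_of_le h4 with h5 | h5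
    · rw [Real.sign_of_neg h5] at h2; norm_num at h2
    · rw [h5, Real.sign_zero] at h2; norm_num at h2
  have := ha (Function.update a n m)
  linarith
end

section
/- Consider a spatial spectrum access game with user-specific channel sharing weights on an arbitrary undirected interference graph: player n has transmission gain h_n > 0 and sharing weight w_n > 0, the channel data rates B_m > 0 are common to all users, and player n's payoff under profile a is U_n(a) = h_n·θ_{a_n}·B_{a_n}·w_n/(w_n + Σ_{i ∈ 𝒩_n^{a_n}(a)} w_i), where 𝒩_n^m(a) = {i ∈ 𝒩_n : a_i = m}. Then Φ(a) = −Σ_{n=1}^N (w_n² + (1/2)·Σ_{i ∈ 𝒩_n^{a_n}(a)} w_n w_i) / (θ_{a_n}·B_{a_n}) is an ordinal potential for the game, and consequently the game has a pure Nash equilibrium. -/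
private lemma sign_pos_mul' {c x : ℝ} (hc : 0 < c) : Real.sign (c * x) = Real.sign x := by
  rcases lt_trichotomy x 0 with hx | hx | hx
  · rw [Real.sign_of_neg hx, Real.sign_of_neg (mul_neg_of_pos_of_neg hc hx)]
  · rw [hx, mul_zero]
  · rw [Real.sign_of_pos hx, Real.sign_of_pos (mul_pos hc hx)]

private lemma sum_split_elem' {α} [DecidableEq α] (s : Finset α) (f : α → ℝ) (n : α) :
    ∑ i ∈ s, f i = ∑ i ∈ s.erase n, f i + (if n ∈ s then f n else 0) := by
  by_cases hn : n ∈ s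
  · rw [if_pos hn]; exact (Finset.sum_erase_add s f hn).symm
  · rw [if_neg hn, Finset.erase_eq_of_notMem hn, add_zero]

private lemma potential_sign (N M : ℕ)
    (𝒩 : Fin (N + 1) → Finset (Fin (N + 1)))
    (hself : ∀ n, n ∉ 𝒩 n)
    (hsym : ∀ i j, i ∈ 𝒩 j ↔ j ∈ 𝒩 i)
    (θ : Fin (M + 1) → ℝ) (hθ : ∀ m, 0 < θ m ∧ θ m < 1)
    (B : Fin (M + 1) → ℝ) (hB : ∀ m, 0 < B m)
    (h : Fin (N + 1) → ℝ) (hh : ∀ n, 0 < h n)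
    (w : Fin (N + 1) → ℝ) (hw : ∀ n, 0 < w n)
    (U : (Fin (N + 1) → Fin (M + 1)) → Fin (N + 1) → ℝ)
    (hU : ∀ a n, U a n = h n * θ (a n) * B (a n) *
      (w n / (w n + ∑ i ∈ (𝒩 n).filter (fun i => a i = a n), w i)))
    (Φ : (Fin (N + 1) → Fin (M + 1)) → ℝ)
    (hΦ : ∀ a, Φ a = -∑ n,
      (w n ^ 2 + (1 / 2) * ∑ i ∈ (𝒩 n).filter (fun i => a i = a n), w n * w i) /
        (θ (a n) * B (a n)))
    (n : Fin (N + 1)) (a : Fin (N + 1) → Fin (M + 1)) (m : Fin (M + 1)) :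
    Real.sign (Φ (Function.update a n m) - Φ a) =
      Real.sign (U (Function.update a n m) n - U a n) := by
  by_cases hm : m = a n
  · subst hm
    rw [Function.update_eq_self, sub_self, sub_self]
  set a' := Function.update a n m with ha'
  have han : a' n = m := Function.update_self n m a
  have hane : ∀ i : Fin (N + 1), i ≠ n → a' i = a i := fun i hi => Function.update_of_ne hi m a
  set c := a n with hc
  set D := θ c * B c with hD
  set D' := θ m * B m with hD'
  have hDpos : 0 < D := mul_pos (hθ c).1 (hB c)
  have hD'pos : 0 < D' := mul_pos (hθ m).1 (hB m)
  set T := ∑ i ∈ (𝒩 n).filter (fun i => a i = c), w i with hT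
  set T' := ∑ i ∈ (𝒩 n).filter (fun i => a i = m), w i with hT'
  have hTnn : (0:ℝ) ≤ T := Finset.sum_nonneg fun i _ => (hw i).le
  have hT'nn : (0:ℝ) ≤ T' := Finset.sum_nonneg fun i _ => (hw i).le
  have hTpos : 0 < w n + T := by linarith [hw n]
  have hT'pos : 0 < w n + T' := by linarith [hw n]
  have hmem : ∀ i ∈ 𝒩 n, i ≠ n := by
    intro i hi hin
    exact hself n (hin ▸ hi)
  have hfilt : ∀ k : Fin (M + 1),
      (𝒩 n).filter (fun i => a' i = k) = (𝒩 n).filter (fun i => a i = k) := by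
    intro k
    apply Finset.filter_congr
    intro i hi
    rw [hane i (hmem i hi)]
  -- U values
  have hUa' : U a' n = h n * D' * (w n / (w n + T')) := by
    rw [hU, han, hfilt m, hD', hT']; ring
  have hUa : U a n = h n * D * (w n / (w n + T)) := by
    rw [hU, ← hc, ← hT, hD]; ring
  have hUdiff : U a' n - U a n =
      (h n * w n / ((w n + T') * (w n + T))) *
        (D' * (w n + T) - D * (w n + T')) := by
    rw [hUa', hUa]
    field_simp
  -- Φ difference
  have hgen : ∀ (k : Fin (M + 1)) (Dk : ℝ),
      (∑ j ∈ Finset.univ.erase n,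
        if j ∈ 𝒩 n ∧ a j = k then (1/2) * (w j * w n) / Dk else 0)
        = (∑ i ∈ (𝒩 n).filter (fun i => a i = k), w i) * ((1/2) * w n / Dk) := by
    intro k Dk
    rw [← Finset.sum_filter]
    have hset : (Finset.univ.erase n).filter (fun j => j ∈ 𝒩 n ∧ a j = k)
        = (𝒩 n).filter (fun i => a i = k) := by
      ext j
      simp only [Finset.mem_filter, Finset.mem_erase, Finset.mem_univ, true_and, and_true]
      constructor
      · rintro ⟨-, hj, hk⟩; exact ⟨hj, hk⟩
      · rintro ⟨hj, hk⟩; exact ⟨hmem j hj, hj, hk⟩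
    rw [hset, Finset.sum_mul]
    exact Finset.sum_congr rfl fun j _ => by ring
  have hkey : ∀ j ∈ Finset.univ.erase n,
      ((w j ^ 2 + (1 / 2) * ∑ i ∈ (𝒩 j).filter (fun i => a i = a j), w j * w i) /
          (θ (a j) * B (a j))
        - (w j ^ 2 + (1 / 2) * ∑ i ∈ (𝒩 j).filter (fun i => a' i = a' j), w j * w i) /
          (θ (a' j) * B (a' j)))
      = ((if j ∈ 𝒩 n ∧ a j = c then (1/2) * (w j * w n) / D else 0)
        - (if j ∈ 𝒩 n ∧ a j = m then (1/2) * (w j * w n) / D' else 0)) := by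
    intro j hj
    have hjn : j ≠ n := Finset.ne_of_mem_erase hj
    have haj : a' j = a j := hane j hjn
    rw [haj]
    have hsplit1 : ∑ i ∈ (𝒩 j).filter (fun i => a i = a j), w j * w i
        = ∑ i ∈ ((𝒩 j).filter (fun i => a i = a j)).erase n, w j * w i
          + (if n ∈ (𝒩 j).filter (fun i => a i = a j) then w j * w n else 0) :=
      sum_split_elem' _ _ n
    have hsplit2 : ∑ i ∈ (𝒩 j).filter (fun i => a' i = a j), w j * w i
        = ∑ i ∈ ((𝒩 j).filter (fun i => a' i = a j)).erase n, w j * w i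
          + (if n ∈ (𝒩 j).filter (fun i => a' i = a j) then w j * w n else 0) :=
      sum_split_elem' _ _ n
    have herase : ((𝒩 j).filter (fun i => a' i = a j)).erase n
        = ((𝒩 j).filter (fun i => a i = a j)).erase n := by
      ext i
      simp only [Finset.mem_erase, Finset.mem_filter]
      constructor
      · rintro ⟨hin, hij, hia⟩
        exact ⟨hin, hij, (hane i hin).symm.trans hia⟩
      · rintro ⟨hin, hij, hia⟩
        exact ⟨hin, hij, (hane i hin).trans hia⟩
    have hmm1 : (n ∈ (𝒩 j).filter (fun i => a i = a j)) ↔ (j ∈ 𝒩 n ∧ a j = c) := by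
      rw [Finset.mem_filter, hsym n j, hc]
      exact ⟨fun ⟨h1, h2⟩ => ⟨h1, h2.symm⟩, fun ⟨h1, h2⟩ => ⟨h1, h2.symm⟩⟩
    have hmm2 : (n ∈ (𝒩 j).filter (fun i => a' i = a j)) ↔ (j ∈ 𝒩 n ∧ a j = m) := by
      rw [Finset.mem_filter, han, hsym n j]
      exact ⟨fun ⟨h1, h2⟩ => ⟨h1, h2.symm⟩, fun ⟨h1, h2⟩ => ⟨h1, h2.symm⟩⟩
    rw [hsplit1, hsplit2, herase, if_congr hmm1 rfl rfl, if_congr hmm2 rfl rfl]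
    by_cases h1 : j ∈ 𝒩 n ∧ a j = c
    · have h2 : ¬(j ∈ 𝒩 n ∧ a j = m) := by
        rintro ⟨-, h2⟩
        exact hm ((h2.symm.trans h1.2).trans hc)
      rw [if_pos h1, if_pos h1, if_neg h2, if_neg h2, h1.2, ← hD]
      ring
    · by_cases h2 : j ∈ 𝒩 n ∧ a j = m
      · rw [if_pos h2, if_pos h2, if_neg h1, if_neg h1, h2.2, ← hD']
        ring
      · rw [if_neg h1, if_neg h1, if_neg h2, if_neg h2]
        ring
  have hΦdiff : Φ a' - Φ a =
      (w n / (D * D')) * (D' * (w n + T) - D * (w n + T')) := by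
    rw [hΦ a', hΦ a, neg_sub_neg, ← Finset.sum_sub_distrib,
      ← Finset.add_sum_erase _ _ (Finset.mem_univ n)]
    rw [Finset.sum_congr rfl hkey, Finset.sum_sub_distrib, hgen c D, hgen m D']
    rw [han, hfilt m, ← hc, ← Finset.mul_sum, ← Finset.mul_sum, ← hT, ← hT', ← hD]
    rw [← hD']
    field_simp
    ring
  rw [hΦdiff, hUdiff,
    sign_pos_mul' (div_pos (hw n) (mul_pos hDpos hD'pos)),
    sign_pos_mul' (div_pos (mul_pos (hh n) (hw n)) (mul_pos hT'pos hTpos))]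

/-- Spatial spectrum access game with user-specific channel sharing weights on an
arbitrary undirected interference graph:
`Φ(a) = −Σₙ (wₙ² + (1/2)·Σ_{i∈𝒩ₙ^{aₙ}(a)} wₙ wᵢ)/(θ_{aₙ} B_{aₙ})` is an ordinal
potential, and the game has a pure Nash equilibrium. -/
theorem stmt_9 (N M : ℕ)
    (𝒩 : Fin (N + 1) → Finset (Fin (N + 1)))
    (hself : ∀ n, n ∉ 𝒩 n)
    -- undirected interference graph:
    (hsym : ∀ i j, i ∈ 𝒩 j ↔ j ∈ 𝒩 i)
    (θ : Fin (M + 1) → ℝ) (hθ : ∀ m, 0 < θ m ∧ θ m < 1)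
    (B : Fin (M + 1) → ℝ) (hB : ∀ m, 0 < B m)
    (h : Fin (N + 1) → ℝ) (hh : ∀ n, 0 < h n)
    (w : Fin (N + 1) → ℝ) (hw : ∀ n, 0 < w n)
    (U : (Fin (N + 1) → Fin (M + 1)) → Fin (N + 1) → ℝ)
    (hU : ∀ a n, U a n = h n * θ (a n) * B (a n) *
      (w n / (w n + ∑ i ∈ (𝒩 n).filter (fun i => a i = a n), w i)))
    (Φ : (Fin (N + 1) → Fin (M + 1)) → ℝ)
    (hΦ : ∀ a, Φ a = -∑ n,
      (w n ^ 2 + (1 / 2) * ∑ i ∈ (𝒩 n).filter (fun i => a i = a n), w n * w i) /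
        (θ (a n) * B (a n))) :
    (∀ (n : Fin (N + 1)) (a : Fin (N + 1) → Fin (M + 1)) (m : Fin (M + 1)),
      Real.sign (Φ (Function.update a n m) - Φ a) =
        Real.sign (U (Function.update a n m) n - U a n)) ∧
    ∃ a : Fin (N + 1) → Fin (M + 1), ∀ (n : Fin (N + 1)) (m : Fin (M + 1)),
      U (Function.update a n m) n ≤ U a n := by
  have hpot := potential_sign N M 𝒩 hself hsym θ hθ B hB h hh w hw U hU Φ hΦ
  refine ⟨hpot, ?_⟩
  obtain ⟨a, ha⟩ := Finite.exists_max Φ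
  refine ⟨a, fun n m => ?_⟩
  by_contra hlt
  push_neg at hlt
  have h1 : Real.sign (U (Function.update a n m) n - U a n) = 1 :=
    Real.sign_of_pos (by linarith)
  have h2 := hpot n a m
  rw [h1] at h2
  have h3 : Φ (Function.update a n m) - Φ a ≤ 0 := by
    linarith [ha (Function.update a n m)]
  rcases h3.lt_or_eq with h4 | h4
  · rw [Real.sign_of_neg h4] at h2; norm_num at h2
  · rw [h4, Real.sign_zero] at h2; norm_num at h2
end

section
/- Consider a spatial spectrum access game on an arbitrary undirected interference graph with homogeneous channels (θ_m = θ ∈ (0,1) and B_m = B > 0 for all channels m), user-specific transmission gains h_n > 0, and the random backoff mechanism, so that player n's payoff under profile a is U_n(a) = h_n·θ·B·f(K_n^{a_n}(a)), where K_n^m(a) = |{i ∈ 𝒩_n : a_i = m}|. Then Φ(a) = −Σ_{n=1}^N (1 + K_n^{a_n}(a)) / (θ·B) is an ordinal potential for the game, and consequently the game has a pure Nash equilibrium. -/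
lemma f_anti (lmax : ℕ) (hl : 2 ≤ lmax) (f : ℕ → ℝ)
    (hf : ∀ c, f c = ∑ l ∈ Finset.Icc 1 lmax,
      (1 / (lmax : ℝ)) * (((lmax : ℝ) - (l : ℝ)) / (lmax : ℝ)) ^ c) :
    StrictAnti f := by
  have hlpos : (0 : ℝ) < lmax := by positivity
  have h1 : (0:ℝ) < 1 / (lmax : ℝ) := by positivity
  apply strictAnti_nat_of_succ_lt
  intro c
  rw [hf c, hf (c + 1)]
  apply Finset.sum_lt_sum
  · intro l hl'
    simp only [Finset.mem_Icc] at hl'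
    have hr0 : (0 : ℝ) ≤ ((lmax : ℝ) - (l : ℝ)) / (lmax : ℝ) := by
      apply div_nonneg _ hlpos.le
      have : (l : ℝ) ≤ lmax := by exact_mod_cast hl'.2
      linarith
    have hr1 : ((lmax : ℝ) - (l : ℝ)) / (lmax : ℝ) ≤ 1 := by
      rw [div_le_one hlpos]
      have : (1 : ℝ) ≤ l := by exact_mod_cast hl'.1
      linarith
    have h2 : (((lmax : ℝ) - (l : ℝ)) / (lmax : ℝ)) ^ (c + 1) ≤
        (((lmax : ℝ) - (l : ℝ)) / (lmax : ℝ)) ^ c :=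
      pow_le_pow_of_le_one hr0 hr1 (Nat.le_succ c)
    exact mul_le_mul_of_nonneg_left h2 h1.le
  · refine ⟨1, ?_, ?_⟩
    · simp only [Finset.mem_Icc]; omega
    · have h2R : (2 : ℝ) ≤ lmax := by exact_mod_cast hl
      have hr0 : (0 : ℝ) < ((lmax : ℝ) - ((1:ℕ) : ℝ)) / (lmax : ℝ) := by
        apply div_pos _ hlpos
        push_cast; linarith
      have hr1 : ((lmax : ℝ) - ((1:ℕ) : ℝ)) / (lmax : ℝ) < 1 := by
        rw [div_lt_one hlpos]; push_cast; linarith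
      have h2 : (((lmax : ℝ) - ((1:ℕ) : ℝ)) / (lmax : ℝ)) ^ (c + 1) <
          (((lmax : ℝ) - ((1:ℕ) : ℝ)) / (lmax : ℝ)) ^ c :=
        pow_lt_pow_right_of_lt_one₀ hr0 hr1 (Nat.lt_succ_self c)
      exact mul_lt_mul_of_pos_left h2 h1

/-- Random backoff spatial spectrum access game with homogeneous channels
(`θ_m = θ`, `B_m = B`) and user-specific transmission gains on an arbitrary
undirected interference graph: `Φ(a) = −Σₙ (1 + Kₙ^{aₙ}(a))/(θB)` is an ordinal
potential, and the game has a pure Nash equilibrium. -/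
theorem stmt_10 (N M lmax : ℕ) (hl : 2 ≤ lmax)
    (𝒩 : Fin (N + 1) → Finset (Fin (N + 1)))
    (hself : ∀ n, n ∉ 𝒩 n)
    -- undirected interference graph:
    (hsym : ∀ i j, i ∈ 𝒩 j ↔ j ∈ 𝒩 i)
    (θ B : ℝ) (hθ : 0 < θ ∧ θ < 1) (hB : 0 < B)
    (h : Fin (N + 1) → ℝ) (hh : ∀ n, 0 < h n)
    -- random backoff channel grabbing probability with c same-channel interferers:
    (f : ℕ → ℝ)
    (hf : ∀ c, f c = ∑ l ∈ Finset.Icc 1 lmax,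
      (1 / (lmax : ℝ)) * (((lmax : ℝ) - (l : ℝ)) / (lmax : ℝ)) ^ c)
    -- number of interferers of player n choosing channel m:
    (K : Fin (N + 1) → Fin (M + 1) → (Fin (N + 1) → Fin (M + 1)) → ℕ)
    (hK : ∀ n m a, K n m a = ((𝒩 n).filter (fun i => a i = m)).card)
    (U : (Fin (N + 1) → Fin (M + 1)) → Fin (N + 1) → ℝ)
    (hU : ∀ a n, U a n = h n * θ * B * f (K n (a n) a))
    (Φ : (Fin (N + 1) → Fin (M + 1)) → ℝ)
    (hΦ : ∀ a, Φ a = -∑ n, (1 + (K n (a n) a : ℝ)) / (θ * B)) :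
    (∀ (n : Fin (N + 1)) (a : Fin (N + 1) → Fin (M + 1)) (m : Fin (M + 1)),
      Real.sign (Φ (Function.update a n m) - Φ a) =
        Real.sign (U (Function.update a n m) n - U a n)) ∧
    ∃ a : Fin (N + 1) → Fin (M + 1), ∀ (n : Fin (N + 1)) (m : Fin (M + 1)),
      U (Function.update a n m) n ≤ U a n := by
  have hθB : (0 : ℝ) < θ * B := mul_pos hθ.1 hB
  have hanti : StrictAnti f := f_anti lmax hl f hf
  -- K of the deviator is unchanged by its own deviation: n ∉ 𝒩 n
  have hKdev : ∀ (a : Fin (N+1) → Fin (M+1)) (n : Fin (N+1)) (m c : Fin (M+1)),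
      K n c (Function.update a n m) = K n c a := by
    intro a n m c
    rw [hK, hK]
    congr 1
    apply Finset.filter_congr
    intro i hi
    have : i ≠ n := fun h' => hself n (h' ▸ hi)
    rw [Function.update_of_ne this]
  -- the key combinatorial identity
  have hkey : ∀ (a : Fin (N+1) → Fin (M+1)) (n : Fin (N+1)) (m : Fin (M+1)),
      (∑ j, (K j ((Function.update a n m) j) (Function.update a n m) : ℤ)) -
        ∑ j, (K j (a j) a : ℤ) =
      2 * ((K n m a : ℤ) - (K n (a n) a : ℤ)) := by
    intro a n m
    set a' := Function.update a n m with ha'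
    rw [← Finset.sum_sub_distrib]
    have hsplit : ∀ j : Fin (N+1),
        (K j (a' j) a' : ℤ) - K j (a j) a =
          if j = n then (K n m a : ℤ) - K n (a n) a
          else if j ∈ 𝒩 n then
            ((if a j = m then (1:ℤ) else 0) - (if a j = a n then (1:ℤ) else 0))
          else 0 := by
      intro j
      by_cases hj : j = n
      · subst hj
        rw [ha', Function.update_self, hKdev, if_pos rfl]
      · rw [if_neg hj]
        have haj : a' j = a j := Function.update_of_ne hj _ _
        by_cases hjn : j ∈ 𝒩 n
        · rw [if_pos hjn]
          have hnj : n ∈ 𝒩 j := (hsym n j).mpr hjn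
          rw [hK, hK, haj]
          have hins : 𝒩 j = insert n ((𝒩 j).erase n) :=
            (Finset.insert_erase hnj).symm
          rw [hins, Finset.filter_insert, Finset.filter_insert]
          have hrest : ((𝒩 j).erase n).filter (fun i => a' i = a j) =
              ((𝒩 j).erase n).filter (fun i => a i = a j) := by
            apply Finset.filter_congr
            intro i hi
            rw [ha', Function.update_of_ne (Finset.ne_of_mem_erase hi)]
          have hnotmem : n ∉ ((𝒩 j).erase n).filter (fun i => a' i = a j) :=
            fun hmem => (Finset.notMem_erase n _) (Finset.mem_filter.mp hmem).1
          have hnotmem' : n ∉ ((𝒩 j).erase n).filter (fun i => a i = a j) :=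
            fun hmem => (Finset.notMem_erase n _) (Finset.mem_filter.mp hmem).1
          have ha'n : a' n = m := Function.update_self _ _ _
          simp only [ha'n, hrest]
          by_cases h1 : m = a j <;> by_cases h2 : a n = a j
          · rw [if_pos h1, if_pos h2, Finset.card_insert_of_notMem hnotmem',
              if_pos h1.symm, if_pos h2.symm]
            push_cast; ring
          · rw [if_pos h1, if_neg h2, Finset.card_insert_of_notMem hnotmem',
              if_pos h1.symm, if_neg (fun hc => h2 hc.symm)]
            push_cast; ring
          · rw [if_neg h1, if_pos h2, Finset.card_insert_of_notMem hnotmem',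
              if_neg (fun hc => h1 hc.symm), if_pos h2.symm]
            push_cast; ring
          · rw [if_neg h1, if_neg h2, if_neg (fun hc => h1 hc.symm),
              if_neg (fun hc => h2 hc.symm)]
            push_cast; ring
        · rw [if_neg hjn]
          have hnj : n ∉ 𝒩 j := fun hc => hjn ((hsym n j).mp hc)
          rw [hK, hK, haj]
          have heq : (𝒩 j).filter (fun i => a' i = a j) =
              (𝒩 j).filter (fun i => a i = a j) := by
            apply Finset.filter_congr
            intro i hi
            have : i ≠ n := fun h' => hnj (h' ▸ hi)
            rw [ha', Function.update_of_ne this]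
          rw [heq]; ring
    rw [Finset.sum_congr rfl (fun j _ => hsplit j)]
    rw [Fintype.sum_eq_add_sum_compl n]
    rw [if_pos rfl]
    have hstep : ∀ j ∈ ({n} : Finset (Fin (N+1)))ᶜ,
        (if j = n then (K n m a : ℤ) - K n (a n) a
          else if j ∈ 𝒩 n then
            ((if a j = m then (1:ℤ) else 0) - (if a j = a n then (1:ℤ) else 0))
          else 0) =
        if j ∈ 𝒩 n then
            ((if a j = m then (1:ℤ) else 0) - (if a j = a n then (1:ℤ) else 0))
          else 0 := by
      intro j hjmem
      have : j ≠ n := by simpa using hjmem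
      rw [if_neg this]
    rw [Finset.sum_congr rfl hstep, Finset.sum_ite_mem]
    have hcap : ({n} : Finset (Fin (N+1)))ᶜ ∩ 𝒩 n = 𝒩 n := by
      ext j
      simp only [Finset.mem_inter, Finset.mem_compl, Finset.mem_singleton]
      constructor
      · exact fun hj => hj.2
      · intro hj
        exact ⟨fun hc => hself n (hc ▸ hj), hj⟩
    rw [hcap, Finset.sum_sub_distrib, Finset.sum_boole, Finset.sum_boole,
      ← hK, ← hK]
    ring
  -- real version of the change of Φ
  have hΦdiff : ∀ (a : Fin (N+1) → Fin (M+1)) (n : Fin (N+1)) (m : Fin (M+1)),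
      Φ (Function.update a n m) - Φ a =
        2 * ((K n (a n) a : ℝ) - (K n m (Function.update a n m) : ℝ)) / (θ * B) := by
    intro a n m
    set a' := Function.update a n m with ha'
    have hZ := hkey a n m
    have hR : (∑ j, (K j (a' j) a' : ℝ)) - ∑ j, (K j (a j) a : ℝ) =
        2 * ((K n m a : ℝ) - (K n (a n) a : ℝ)) := by exact_mod_cast hZ
    rw [hΦ, hΦ, ← Finset.sum_div, ← Finset.sum_div]
    rw [Finset.sum_add_distrib, Finset.sum_add_distrib, hKdev]
    field_simp
    ring_nf
    nlinarith [hR, congrArg (fun x => x * θ⁻¹) hR]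
  -- change of U
  have hUdiff : ∀ (a : Fin (N+1) → Fin (M+1)) (n : Fin (N+1)) (m : Fin (M+1)),
      U (Function.update a n m) n - U a n =
        (h n * θ * B) * (f (K n m a) - f (K n (a n) a)) := by
    intro a n m
    rw [hU, hU]
    have : (Function.update a n m) n = m := Function.update_self _ _ _
    rw [this, hKdev]
    ring
  have hsign : ∀ (n : Fin (N + 1)) (a : Fin (N + 1) → Fin (M + 1)) (m : Fin (M + 1)),
      Real.sign (Φ (Function.update a n m) - Φ a) =
        Real.sign (U (Function.update a n m) n - U a n) := by
    intro n a m
    rw [hΦdiff, hUdiff, hKdev]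
    have hpos : (0:ℝ) < h n * θ * B := mul_pos (mul_pos (hh n) hθ.1) hB
    rcases lt_trichotomy (K n m a) (K n (a n) a) with hlt | heq | hgt
    · have h1 : (0:ℝ) < 2 * ((K n (a n) a : ℝ) - (K n m a : ℝ)) / (θ * B) := by
        have : (K n m a : ℝ) < K n (a n) a := by exact_mod_cast hlt
        apply div_pos _ hθB; linarith
      have h2 : (0:ℝ) < (h n * θ * B) * (f (K n m a) - f (K n (a n) a)) := by
        have := hanti hlt
        apply mul_pos hpos; linarith
      rw [Real.sign_of_pos h1, Real.sign_of_pos h2]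
    · rw [heq]
      simp [Real.sign_zero]
    · have h1 : 2 * ((K n (a n) a : ℝ) - (K n m a : ℝ)) / (θ * B) < 0 := by
        have : (K n (a n) a : ℝ) < K n m a := by exact_mod_cast hgt
        apply div_neg_of_neg_of_pos _ hθB; linarith
      have h2 : (h n * θ * B) * (f (K n m a) - f (K n (a n) a)) < 0 := by
        have := hanti hgt
        apply mul_neg_of_pos_of_neg hpos; linarith
      rw [Real.sign_of_neg h1, Real.sign_of_neg h2]
  refine ⟨hsign, ?_⟩
  obtain ⟨a, -, hmax⟩ := Finset.exists_max_image (Finset.univ) Φ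
    (Finset.univ_nonempty)
  refine ⟨a, fun n m => ?_⟩
  by_contra hcon
  push_neg at hcon
  have hU1 : Real.sign (U (Function.update a n m) n - U a n) = 1 :=
    Real.sign_of_pos (by linarith)
  have hΦle : Φ (Function.update a n m) - Φ a ≤ 0 :=
    sub_nonpos.mpr (hmax _ (Finset.mem_univ _))
  rcases lt_or_eq_of_le hΦle with hΦlt | hΦeq
  · have := Real.sign_of_neg hΦlt
    rw [hsign n a m, hU1] at this
    norm_num at this
  · have h0 : Real.sign (Φ (Function.update a n m) - Φ a) = 0 := by
      rw [hΦeq, Real.sign_zero]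
    rw [hsign n a m, hU1] at h0
    norm_num at h0
end

section
/- In the setting of the Aloha spatial spectrum access game on an undirected interference graph with potential Φ(a) = Σ_{i=1}^N (−ln(1 − p_i))·( (1/2)·Σ_{j ∈ 𝒩_i^{a_i}(a)} ln(1 − p_j) + ln(θ_{a_i}·B_{a_i}^i·p_i) ), the following exact identity holds: for every player k, every profile a ∈ ℳ^N, and every channel m, with a' = (m, a_{−k}), Φ(a') − Φ(a) = (−ln(1 − p_k))·( ln U_k(a') − ln U_k(a) ). In particular, since −ln(1 − p_k) > 0, the game is a weighted potential game in the logarithms of the payoffs. -/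
lemma ite_comm_zero {α : Type*} [DecidableEq α] (x y : α) (c : ℝ) :
    (if x = y then c else 0) = (if y = x then c else 0) := by
  by_cases h : x = y
  · simp [h]
  · simp [h, Ne.symm h]



/-- Exact weighted-potential identity for the Aloha spatial spectrum access game on an
undirected interference graph: for a unilateral deviation of player `k`,
`Φ(a') − Φ(a) = (−ln(1−p_k))·(ln U_k(a') − ln U_k(a))`. -/
theorem stmt_12 (N M : ℕ)
    (𝒩 : Fin (N + 1) → Finset (Fin (N + 1)))
    (hself : ∀ n, n ∉ 𝒩 n)
    -- undirected interference graph: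
    (hsym : ∀ i j, i ∈ 𝒩 j ↔ j ∈ 𝒩 i)
    (θ : Fin (M + 1) → ℝ) (hθ : ∀ m, 0 < θ m ∧ θ m < 1)
    (B : Fin (M + 1) → Fin (N + 1) → ℝ) (hB : ∀ m n, 0 < B m n)
    (p : Fin (N + 1) → ℝ) (hp : ∀ n, 0 < p n ∧ p n < 1)
    (U : (Fin (N + 1) → Fin (M + 1)) → Fin (N + 1) → ℝ)
    (hU : ∀ a n, U a n = θ (a n) * B (a n) n * p n *
      ∏ i ∈ (𝒩 n).filter (fun i => a i = a n), (1 - p i))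
    (Φ : (Fin (N + 1) → Fin (M + 1)) → ℝ)
    (hΦ : ∀ a, Φ a = ∑ i, (-(Real.log (1 - p i))) *
      ((1 / 2) * (∑ j ∈ (𝒩 i).filter (fun j => a j = a i), Real.log (1 - p j)) +
        Real.log (θ (a i) * B (a i) i * p i))) :
    ∀ (k : Fin (N + 1)) (a : Fin (N + 1) → Fin (M + 1)) (m : Fin (M + 1)),
      Φ (Function.update a k m) - Φ a =
        (-(Real.log (1 - p k))) *
          (Real.log (U (Function.update a k m) k) - Real.log (U a k)) := by
  intro k a m
  have hpne : ∀ i, (1 : ℝ) - p i ≠ 0 := fun i =>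
    ne_of_gt (by have := (hp i).2; linarith)
  set L : Fin (N + 1) → ℝ := fun i => Real.log (1 - p i) with hLdef
  set C : (Fin (N + 1) → Fin (M + 1)) → Fin (N + 1) → ℝ :=
    fun b i => Real.log (θ (b i) * B (b i) i * p i) with hCdef
  set S : (Fin (N + 1) → Fin (M + 1)) → Fin (N + 1) → ℝ :=
    fun b i => ∑ j ∈ 𝒩 i, if b j = b i then L j else 0 with hSdef
  set a' := Function.update a k m with ha'def
  have ha'k : a' k = m := Function.update_self k m a
  have ha'ne : ∀ j, j ≠ k → a' j = a j := fun j hj => Function.update_of_ne hj m a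
  -- log of the payoff
  have hlogU : ∀ b n, Real.log (U b n) = C b n + S b n := by
    intro b n
    have h1 : θ (b n) * B (b n) n * p n ≠ 0 := by
      have h1 := (hθ (b n)).1; have h2 := hB (b n) n; have h3 := (hp n).1
      positivity
    have h2 : (∏ i ∈ (𝒩 n).filter (fun i => b i = b n), (1 - p i)) ≠ 0 :=
      Finset.prod_ne_zero_iff.mpr (fun i _ => hpne i)
    rw [hU, Real.log_mul h1 h2, Real.log_prod (fun i _ => hpne i)]
    simp only [hCdef, hSdef, hLdef]
    rw [Finset.sum_filter]
  -- potential in terms of S and C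
  have hΦ' : ∀ b, Φ b = ∑ i, (-(L i)) * ((1 / 2) * S b i + C b i) := by
    intro b
    rw [hΦ]
    refine Finset.sum_congr rfl fun i _ => ?_
    simp only [hCdef, hSdef, hLdef]
    rw [Finset.sum_filter]
  -- the deviation sum at k
  have hSa'k : S a' k = ∑ j ∈ 𝒩 k, if a j = m then L j else 0 := by
    simp only [hSdef]
    refine Finset.sum_congr rfl fun j hj => ?_
    have hjk : j ≠ k := fun h => hself k (h ▸ hj)
    rw [ha'ne j hjk, ha'k]
  have hSak : S a k = ∑ j ∈ 𝒩 k, if a j = a k then L j else 0 := rfl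
  -- termwise difference for i ≠ k
  have hfi : ∀ i ∈ Finset.univ.erase k,
      ((-(L i)) * ((1 / 2) * S a' i + C a' i) - (-(L i)) * ((1 / 2) * S a i + C a i)) =
        if i ∈ 𝒩 k then
          (-(L i)) * ((1 / 2) * ((if m = a i then L k else 0) - (if a k = a i then L k else 0)))
        else 0 := by
    intro i hi
    have hik : i ≠ k := Finset.ne_of_mem_erase hi
    have ha'i : a' i = a i := ha'ne i hik
    have hCi : C a' i = C a i := by simp only [hCdef, ha'i]
    have hSi : S a' i - S a i =
        if k ∈ 𝒩 i then ((if m = a i then L k else 0) - (if a k = a i then L k else 0))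
        else 0 := by
      simp only [hSdef]
      rw [← Finset.sum_sub_distrib]
      by_cases hk : k ∈ 𝒩 i
      · rw [if_pos hk]
        rw [Finset.sum_eq_single_of_mem k hk]
        · rw [ha'k, ha'i]
        · intro j hj hjk
          rw [ha'ne j hjk, ha'i, sub_self]
      · rw [if_neg hk]
        apply Finset.sum_eq_zero
        intro j hj
        have hjk : j ≠ k := fun h => hk (h ▸ hj)
        rw [ha'ne j hjk, ha'i, sub_self]
    have key : (-(L i)) * ((1 / 2) * S a' i + C a i) - (-(L i)) * ((1 / 2) * S a i + C a i)
        = (-(L i)) * ((1 / 2) * (S a' i - S a i)) := by ring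
    rw [hCi, key, hSi]
    by_cases h : i ∈ 𝒩 k
    · rw [if_pos ((hsym k i).mpr h), if_pos h]
    · rw [if_neg (fun hh => h ((hsym k i).mp hh)), if_neg h, mul_zero, mul_zero]
  -- now compute
  rw [hΦ' a', hΦ' a, hlogU a' k, hlogU a k, ← Finset.sum_sub_distrib]
  rw [← Finset.add_sum_erase _ _ (Finset.mem_univ k)]
  rw [Finset.sum_congr rfl hfi]
  have hsub : 𝒩 k ⊆ Finset.univ.erase k := fun i hi =>
    Finset.mem_erase.mpr ⟨fun h => hself k (h ▸ hi), Finset.mem_univ i⟩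
  rw [Finset.sum_ite_mem, Finset.inter_eq_right.mpr hsub]
  have hsum : (∑ i ∈ 𝒩 k,
      (-(L i)) * ((1 / 2) * ((if m = a i then L k else 0) - (if a k = a i then L k else 0))))
      = (-(L k)) * ((1 / 2) * (S a' k - S a k)) := by
    rw [hSa'k, hSak, ← Finset.sum_sub_distrib, Finset.mul_sum, Finset.mul_sum]
    refine Finset.sum_congr rfl fun j hj => ?_
    rw [ite_comm_zero m (a j), ite_comm_zero (a k) (a j)]
    split_ifs <;> ring
  rw [hsum]
  ring
end

section
/- Consider a spatial spectrum access game satisfying the congestion property, and let V_n = max_{m ∈ ℳ} θ_m·B_m^n. Then for every pure Nash equilibrium ã of the game, Σ_{n ∈ 𝒩} U_n(ã) ≥ ( min_{n ∈ 𝒩} { V_n·g_n(𝒩_n) } / max_{n ∈ 𝒩} V_n ) · max_{a ∈ ℳ^N} Σ_{n ∈ 𝒩} U_n(a). In particular, the price of anarchy of the game (the ratio of the worst-case Nash equilibrium total throughput to the maximal total throughput) is at least min_n{V_n g_n(𝒩_n)}/max_n V_n. -/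
/-- Price of anarchy bound for spatial spectrum access games satisfying the congestion
property: with `V_n = max_m θ_m B_m^n`, every pure Nash equilibrium `ã` satisfies
`Σₙ Uₙ(ã) ≥ (minₙ V_n g_n(𝒩_n) / maxₙ V_n) · max_a Σₙ Uₙ(a)`. -/
theorem stmt_13 (N M : ℕ)
    (𝒩 : Fin (N + 1) → Finset (Fin (N + 1)))
    (hself : ∀ n, n ∉ 𝒩 n)
    (θ : Fin (M + 1) → ℝ) (hθ : ∀ m, 0 < θ m ∧ θ m < 1)
    (B : Fin (M + 1) → Fin (N + 1) → ℝ) (hB : ∀ m n, 0 < B m n)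
    (g : Fin (N + 1) → Finset (Fin (N + 1)) → ℝ)
    (hg : ∀ n S, S ⊆ 𝒩 n → 0 < g n S ∧ g n S < 1)
    -- congestion property:
    (hCP : ∀ n S T, S ⊆ T → T ⊆ 𝒩 n → g n T ≤ g n S)
    (U : (Fin (N + 1) → Fin (M + 1)) → Fin (N + 1) → ℝ)
    (hU : ∀ a n, U a n = θ (a n) * B (a n) n *
      g n ((𝒩 n).filter (fun i => a i = a n)))
    (V : Fin (N + 1) → ℝ)
    (hV : ∀ n, V n = Finset.univ.sup' Finset.univ_nonempty (fun m => θ m * B m n)) :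
    ∀ atil : Fin (N + 1) → Fin (M + 1),
      (∀ (n : Fin (N + 1)) (m : Fin (M + 1)),
        U (Function.update atil n m) n ≤ U atil n) →
      (Finset.univ.inf' Finset.univ_nonempty (fun n => V n * g n (𝒩 n))) /
          (Finset.univ.sup' Finset.univ_nonempty (fun n => V n)) *
          (Finset.univ.sup' Finset.univ_nonempty
            (fun a : Fin (N + 1) → Fin (M + 1) => ∑ n, U a n)) ≤
        ∑ n, U atil n := by
  intro atil hNE
  set c : ℝ := Finset.univ.inf' Finset.univ_nonempty (fun n => V n * g n (𝒩 n)) with hc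
  set D : ℝ := Finset.univ.sup' Finset.univ_nonempty (fun n : Fin (N+1) => V n) with hD
  have hVpos : ∀ n, 0 < V n := by
    intro n
    rw [hV n]
    have := Finset.le_sup' (fun m => θ m * B m n) (Finset.mem_univ (0 : Fin (M+1)))
    exact lt_of_lt_of_le (mul_pos (hθ 0).1 (hB 0 n)) this
  have hDpos : 0 < D :=
    lt_of_lt_of_le (hVpos 0) (Finset.le_sup' _ (Finset.mem_univ (0 : Fin (N+1))))
  have hcpos : 0 < c := by
    rw [hc]
    apply (Finset.lt_inf'_iff _).2
    intro n _
    exact mul_pos (hVpos n) (hg n (𝒩 n) (subset_refl _)).1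
  -- each payoff is at most V n
  have hUle : ∀ (a : Fin (N+1) → Fin (M+1)) n, U a n ≤ V n := by
    intro a n
    rw [hU a n]
    have hsub : (𝒩 n).filter (fun i => a i = a n) ⊆ 𝒩 n := Finset.filter_subset _ _
    have hg1 := (hg n _ hsub).2
    have hθB : 0 < θ (a n) * B (a n) n := mul_pos (hθ (a n)).1 (hB (a n) n)
    calc θ (a n) * B (a n) n * g n ((𝒩 n).filter (fun i => a i = a n))
        ≤ θ (a n) * B (a n) n * 1 := by nlinarith
      _ = θ (a n) * B (a n) n := mul_one _
      _ ≤ V n := by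
          rw [hV n]
          exact Finset.le_sup' (fun m => θ m * B m n) (Finset.mem_univ (a n))
  -- NE payoff lower bound
  have hNElb : ∀ n, c ≤ U atil n := by
    intro n
    obtain ⟨m, _, hm⟩ := Finset.exists_mem_eq_sup' (Finset.univ_nonempty)
      (fun m => θ m * B m n)
    have hVn : V n = θ m * B m n := by rw [hV n, hm]
    have key : θ m * B m n * g n (𝒩 n) ≤ U (Function.update atil n m) n := by
      rw [hU]
      have hupd : Function.update atil n m n = m := Function.update_self n m atil
      rw [hupd]
      have hsub : (𝒩 n).filter (fun i => Function.update atil n m i = m) ⊆ 𝒩 n :=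
        Finset.filter_subset _ _
      have hgle : g n (𝒩 n) ≤ g n ((𝒩 n).filter (fun i => Function.update atil n m i = m)) :=
        hCP n _ _ hsub (subset_refl _)
      have hθB : 0 < θ m * B m n := mul_pos (hθ m).1 (hB m n)
      nlinarith
    calc c ≤ V n * g n (𝒩 n) :=
          Finset.inf'_le (fun n => V n * g n (𝒩 n)) (Finset.mem_univ n)
      _ = θ m * B m n * g n (𝒩 n) := by rw [hVn]
      _ ≤ U (Function.update atil n m) n := key
      _ ≤ U atil n := hNE n m
  -- total NE payoff ≥ (N+1) c
  have hsumlb : (N + 1 : ℝ) * c ≤ ∑ n, U atil n := by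
    calc (N + 1 : ℝ) * c = ∑ _n : Fin (N+1), c := by
          rw [Finset.sum_const, Finset.card_univ, Fintype.card_fin]
          push_cast; ring
      _ ≤ ∑ n, U atil n := Finset.sum_le_sum (fun n _ => hNElb n)
  -- optimal total payoff ≤ (N+1) D
  have hsupub : Finset.univ.sup' Finset.univ_nonempty
      (fun a : Fin (N + 1) → Fin (M + 1) => ∑ n, U a n) ≤ (N + 1 : ℝ) * D := by
    apply Finset.sup'_le
    intro a _
    calc ∑ n, U a n ≤ ∑ n, V n := Finset.sum_le_sum (fun n _ => hUle a n)
      _ ≤ ∑ _n : Fin (N+1), D :=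
          Finset.sum_le_sum (fun n _ => Finset.le_sup' _ (Finset.mem_univ n))
      _ = (N + 1 : ℝ) * D := by
          rw [Finset.sum_const, Finset.card_univ, Fintype.card_fin]
          push_cast; ring
  have hcd : 0 ≤ c / D := le_of_lt (div_pos hcpos hDpos)
  calc c / D * Finset.univ.sup' Finset.univ_nonempty
        (fun a : Fin (N + 1) → Fin (M + 1) => ∑ n, U a n)
      ≤ c / D * ((N + 1 : ℝ) * D) := mul_le_mul_of_nonneg_left hsupub hcd
    _ = (N + 1 : ℝ) * c := by field_simp
    _ ≤ ∑ n, U atil n := hsumlb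
end

section
/- For the distributed learning dynamics of a spatial spectrum access game, if the maximum in-degree satisfies max_{n∈𝒩}|𝒩_n| ≥ 1 and the temperature satisfies γ < 1 / ( 2·max_{m∈ℳ, n∈𝒩}{θ_m B_m^n}·max_{n∈𝒩}|𝒩_n| ), then the map Q is a maximum-norm contraction: for all perception matrices P, P̂ ∈ ℝ^{𝒩×ℳ}, max_{n∈𝒩, m∈ℳ} |Q_m^n(P) − Q_m^n(P̂)| ≤ 2γ·(max_{m,n} θ_m B_m^n)·(max_n |𝒩_n|)·max_{n,m} |P_m^n − P̂_m^n|, where the contraction constant 2γ·(max_{m,n} θ_m B_m^n)·(max_n |𝒩_n|) is strictly less than 1. -/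
lemma aux_core (t : ℝ) (ht : 0 ≤ t) : 2 * (Real.exp t - 1) ≤ t * (Real.exp t + 1) := by
  have hmono : Monotone (fun s : ℝ => s * Real.exp s + s + 2 - 2 * Real.exp s) := by
    apply monotone_of_deriv_nonneg
    · fun_prop
    · intro x
      have hd : HasDerivAt (fun s : ℝ => s * Real.exp s + s + 2 - 2 * Real.exp s)
          ((1 * Real.exp x + x * Real.exp x) + 1 + 0 - 2 * Real.exp x) x := by
        have h1 : HasDerivAt (fun s : ℝ => s * Real.exp s)
            (1 * Real.exp x + x * Real.exp x) x :=
          (hasDerivAt_id x).mul (Real.hasDerivAt_exp x)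
        have h2 : HasDerivAt (fun s : ℝ => 2 * Real.exp s) (2 * Real.exp x) x :=
          (Real.hasDerivAt_exp x).const_mul 2
        exact (((h1.add (hasDerivAt_id x)).add (hasDerivAt_const x 2)).sub h2)
      rw [hd.deriv]
      have h3 : (1 - x) ≤ Real.exp (-x) := by
        have := Real.add_one_le_exp (-x); linarith
      have h4 : (1 - x) * Real.exp x ≤ 1 := by
        have := mul_le_mul_of_nonneg_right h3 (Real.exp_pos x).le
        rwa [← Real.exp_add, neg_add_cancel, Real.exp_zero] at this
      nlinarith [Real.exp_pos x]
  have := hmono ht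
  simp only [zero_mul, Real.exp_zero] at this
  nlinarith

lemma aux_exp (u v : ℝ) : |Real.exp u - Real.exp v| ≤ |u - v| * (Real.exp u + Real.exp v) / 2 := by
  have key : ∀ a b : ℝ, b ≤ a → Real.exp a - Real.exp b ≤ (a - b) * (Real.exp a + Real.exp b) / 2 := by
    intro a b hba
    have h := aux_core (a - b) (by linarith)
    have hb := Real.exp_pos b
    have heq : Real.exp a = Real.exp b * Real.exp (a - b) := by
      rw [← Real.exp_add]; ring_nf
    nlinarith [mul_le_mul_of_nonneg_left h hb.le]
  rcases le_total v u with h | h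
  · rw [abs_of_nonneg (by linarith [Real.exp_le_exp.mpr h]), abs_of_nonneg (by linarith)]
    exact key u v h
  · rw [abs_of_nonpos (by linarith [Real.exp_le_exp.mpr h]), abs_of_nonpos (by linarith)]
    have := key v u h
    nlinarith


lemma aux_softmax {M : ℕ} (γ : ℝ) (hγ : 0 < γ) (a b : Fin (M+1) → ℝ) (K : ℝ)
    (hK : ∀ m, |a m - b m| ≤ K) (m : Fin (M+1)) :
    |Real.exp (γ * a m) / (∑ m', Real.exp (γ * a m')) -
     Real.exp (γ * b m) / (∑ m', Real.exp (γ * b m'))| ≤ 2 * γ * K := by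
  have hK0 : 0 ≤ K := le_trans (abs_nonneg _) (hK m)
  set A := ∑ m', Real.exp (γ * a m') with hAdef
  set Bs := ∑ m', Real.exp (γ * b m') with hBdef
  have hA : 0 < A := Finset.sum_pos (fun i _ => Real.exp_pos _) Finset.univ_nonempty
  have hB : 0 < Bs := Finset.sum_pos (fun i _ => Real.exp_pos _) Finset.univ_nonempty
  rw [div_sub_div _ _ hA.ne' hB.ne']
  rw [abs_div, abs_of_pos (mul_pos hA hB)]
  rw [div_le_iff₀ (mul_pos hA hB)]
  have hnum : Real.exp (γ * a m) * Bs - A * Real.exp (γ * b m) =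
      ∑ k, (Real.exp (γ * a m + γ * b k) - Real.exp (γ * b m + γ * a k)) := by
    rw [Finset.sum_sub_distrib]
    simp_rw [Real.exp_add]
    rw [← Finset.mul_sum, ← Finset.mul_sum, ← hAdef, ← hBdef]
    ring
  rw [hnum]
  calc |∑ k, (Real.exp (γ * a m + γ * b k) - Real.exp (γ * b m + γ * a k))|
      ≤ ∑ k, |Real.exp (γ * a m + γ * b k) - Real.exp (γ * b m + γ * a k)| :=
        Finset.abs_sum_le_sum_abs _ _
    _ ≤ ∑ k, γ * K * (Real.exp (γ * a m + γ * b k) + Real.exp (γ * b m + γ * a k)) := by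
        apply Finset.sum_le_sum
        intro k _
        have h1 := aux_exp (γ * a m + γ * b k) (γ * b m + γ * a k)
        have h2 : |(γ * a m + γ * b k) - (γ * b m + γ * a k)| ≤ 2 * γ * K := by
          have heq : (γ * a m + γ * b k) - (γ * b m + γ * a k) = γ * (a m - b m) + γ * (b k - a k) := by ring
          rw [heq]
          calc |γ * (a m - b m) + γ * (b k - a k)| ≤ |γ * (a m - b m)| + |γ * (b k - a k)| := abs_add_le _ _
            _ = γ * |a m - b m| + γ * |b k - a k| := by
                rw [abs_mul, abs_mul, abs_of_pos hγ]
            _ ≤ γ * K + γ * K := by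
                have hk' := hK k
                rw [abs_sub_comm] at hk'
                exact add_le_add (mul_le_mul_of_nonneg_left (hK m) hγ.le)
                  (mul_le_mul_of_nonneg_left hk' hγ.le)
            _ = 2 * γ * K := by ring
        nlinarith [Real.exp_pos (γ * a m + γ * b k), Real.exp_pos (γ * b m + γ * a k),
          abs_nonneg ((γ * a m + γ * b k) - (γ * b m + γ * a k))]
    _ = γ * K * (Real.exp (γ * a m) * Bs + Real.exp (γ * b m) * A) := by
        rw [← Finset.mul_sum, Finset.sum_add_distrib]
        simp_rw [Real.exp_add]
        rw [← Finset.mul_sum, ← Finset.mul_sum, ← hAdef, ← hBdef]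
    _ ≤ γ * K * (A * Bs + Bs * A) := by
        apply mul_le_mul_of_nonneg_left _ (by positivity)
        have hma : Real.exp (γ * a m) ≤ A :=
          Finset.single_le_sum (f := fun m' => Real.exp (γ * a m')) (fun i _ => (Real.exp_pos _).le) (Finset.mem_univ m)
        have hmb : Real.exp (γ * b m) ≤ Bs :=
          Finset.single_le_sum (f := fun m' => Real.exp (γ * b m')) (fun i _ => (Real.exp_pos _).le) (Finset.mem_univ m)
        exact add_le_add (mul_le_mul_of_nonneg_right hma hB.le)
          (mul_le_mul_of_nonneg_right hmb hA.le)
    _ = 2 * γ * K * (A * Bs) := by ring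


lemma aux_prob {ι : Type*} [DecidableEq ι] (A : Finset ι) (g : Finset ι → ℝ)
    (hg : ∀ S ∈ A.powerset, 0 ≤ g S ∧ g S ≤ 1) (x : ι → ℝ)
    (hx : ∀ i ∈ A, 0 ≤ x i ∧ x i ≤ 1) :
    0 ≤ (∑ S ∈ A.powerset, g S * (∏ i ∈ S, x i) * ∏ i ∈ A \ S, (1 - x i)) ∧
    (∑ S ∈ A.powerset, g S * (∏ i ∈ S, x i) * ∏ i ∈ A \ S, (1 - x i)) ≤ 1 := by
  have hw : ∀ S ∈ A.powerset, 0 ≤ (∏ i ∈ S, x i) * ∏ i ∈ A \ S, (1 - x i) := by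
    intro S hS
    rw [Finset.mem_powerset] at hS
    apply mul_nonneg
    · exact Finset.prod_nonneg fun i hi => (hx i (hS hi)).1
    · exact Finset.prod_nonneg fun i hi => by
        have := hx i (Finset.mem_sdiff.mp hi).1; linarith [this.2]
  constructor
  · apply Finset.sum_nonneg
    intro S hS
    rw [mul_assoc]
    exact mul_nonneg (hg S hS).1 (hw S hS)
  · calc (∑ S ∈ A.powerset, g S * (∏ i ∈ S, x i) * ∏ i ∈ A \ S, (1 - x i))
        ≤ ∑ S ∈ A.powerset, (∏ i ∈ S, x i) * ∏ i ∈ A \ S, (1 - x i) := by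
          apply Finset.sum_le_sum
          intro S hS
          rw [mul_assoc]
          nlinarith [(hg S hS).1, (hg S hS).2, hw S hS]
      _ = ∏ i ∈ A, (x i + (1 - x i)) := (Finset.prod_add x (fun i => 1 - x i) A).symm
      _ = 1 := by simp

lemma aux_lip {ι : Type*} [DecidableEq ι] (A : Finset ι) (x y : ι → ℝ)
    (hx : ∀ i ∈ A, 0 ≤ x i ∧ x i ≤ 1) (hy : ∀ i ∈ A, 0 ≤ y i ∧ y i ≤ 1)
    (g : Finset ι → ℝ) (hg : ∀ S ∈ A.powerset, 0 ≤ g S ∧ g S ≤ 1) :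
    |(∑ S ∈ A.powerset, g S * (∏ i ∈ S, x i) * ∏ i ∈ A \ S, (1 - x i)) -
     (∑ S ∈ A.powerset, g S * (∏ i ∈ S, y i) * ∏ i ∈ A \ S, (1 - y i))| ≤
    ∑ i ∈ A, |x i - y i| := by
  induction A using Finset.induction_on generalizing g with
  | empty => simp
  | @insert a s ha IH =>
    have hxs : ∀ i ∈ s, 0 ≤ x i ∧ x i ≤ 1 := fun i hi => hx i (Finset.mem_insert_of_mem hi)
    have hys : ∀ i ∈ s, 0 ≤ y i ∧ y i ≤ 1 := fun i hi => hy i (Finset.mem_insert_of_mem hi)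
    have hxa := hx a (Finset.mem_insert_self a s)
    have hya := hy a (Finset.mem_insert_self a s)
    -- the two shifted g's
    set g0 : Finset ι → ℝ := g with hg0
    have hg0' : ∀ S ∈ s.powerset, 0 ≤ g0 S ∧ g0 S ≤ 1 := by
      intro S hS
      exact hg S (Finset.mem_powerset.mpr ((Finset.mem_powerset.mp hS).trans (Finset.subset_insert a s)))
    have hg1' : ∀ S ∈ s.powerset, 0 ≤ g (insert a S) ∧ g (insert a S) ≤ 1 := by
      intro S hS
      apply hg
      rw [Finset.mem_powerset]
      exact Finset.insert_subset_insert a (Finset.mem_powerset.mp hS)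
    -- rewrite the sums
    have key : ∀ z : ι → ℝ,
        (∑ S ∈ (insert a s).powerset, g S * (∏ i ∈ S, z i) * ∏ i ∈ (insert a s) \ S, (1 - z i)) =
        (1 - z a) * (∑ S ∈ s.powerset, g S * (∏ i ∈ S, z i) * ∏ i ∈ s \ S, (1 - z i)) +
        z a * (∑ S ∈ s.powerset, g (insert a S) * (∏ i ∈ S, z i) * ∏ i ∈ s \ S, (1 - z i)) := by
      intro z
      rw [Finset.sum_powerset_insert ha]
      rw [Finset.mul_sum, Finset.mul_sum]
      congr 1
      · apply Finset.sum_congr rfl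
        intro S hS
        rw [Finset.mem_powerset] at hS
        have haS : a ∉ S := fun h => ha (hS h)
        have h1 : (insert a s) \ S = insert a (s \ S) := by
          rw [Finset.insert_sdiff_of_notMem _ haS]
        rw [h1, Finset.prod_insert (by simp [ha])]
        ring
      · apply Finset.sum_congr rfl
        intro S hS
        rw [Finset.mem_powerset] at hS
        have haS : a ∉ S := fun h => ha (hS h)
        have h2 : (insert a s) \ (insert a S) = s \ S := by
          ext z
          simp only [Finset.mem_sdiff, Finset.mem_insert]
          constructor
          · rintro ⟨hz1 | hz1, hz2⟩
            · exact absurd (Or.inl hz1) hz2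
            · exact ⟨hz1, fun hzS => hz2 (Or.inr hzS)⟩
          · rintro ⟨hz1, hz2⟩
            refine ⟨Or.inr hz1, ?_⟩
            rintro (rfl | hzS)
            · exact ha hz1
            · exact hz2 hzS
        rw [h2, Finset.prod_insert haS]
        ring
    rw [key x, key y]
    set F0x := ∑ S ∈ s.powerset, g S * (∏ i ∈ S, x i) * ∏ i ∈ s \ S, (1 - x i)
    set F0y := ∑ S ∈ s.powerset, g S * (∏ i ∈ S, y i) * ∏ i ∈ s \ S, (1 - y i)
    set F1x := ∑ S ∈ s.powerset, g (insert a S) * (∏ i ∈ S, x i) * ∏ i ∈ s \ S, (1 - x i)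
    set F1y := ∑ S ∈ s.powerset, g (insert a S) * (∏ i ∈ S, y i) * ∏ i ∈ s \ S, (1 - y i)
    have h0 : |F0x - F0y| ≤ ∑ i ∈ s, |x i - y i| := IH hxs hys g hg0'
    have h1 : |F1x - F1y| ≤ ∑ i ∈ s, |x i - y i| :=
      IH hxs hys (fun S => g (insert a S)) hg1'
    have hb0 := aux_prob s g hg0' y hys
    have hb1 := aux_prob s (fun S => g (insert a S)) hg1' y hys
    have heq : (1 - x a) * F0x + x a * F1x - ((1 - y a) * F0y + y a * F1y) =
        (1 - x a) * (F0x - F0y) + x a * (F1x - F1y) + (x a - y a) * (F1y - F0y) := by ring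
    rw [heq, Finset.sum_insert ha]
    have hF10 : |F1y - F0y| ≤ 1 := by
      rw [abs_le]; constructor <;> [linarith [hb0.2, hb1.1]; linarith [hb0.1, hb1.2]]
    calc |(1 - x a) * (F0x - F0y) + x a * (F1x - F1y) + (x a - y a) * (F1y - F0y)|
        ≤ |(1 - x a) * (F0x - F0y) + x a * (F1x - F1y)| + |(x a - y a) * (F1y - F0y)| := abs_add_le _ _
      _ ≤ |(1 - x a) * (F0x - F0y)| + |x a * (F1x - F1y)| + |(x a - y a) * (F1y - F0y)| := by
          linarith [abs_add_le ((1 - x a) * (F0x - F0y)) (x a * (F1x - F1y))]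
      _ = (1 - x a) * |F0x - F0y| + x a * |F1x - F1y| + |x a - y a| * |F1y - F0y| := by
          rw [abs_mul, abs_mul, abs_mul, abs_of_nonneg (by linarith [hxa.2]),
            abs_of_nonneg hxa.1]
      _ ≤ (1 - x a) * (∑ i ∈ s, |x i - y i|) + x a * (∑ i ∈ s, |x i - y i|) +
          |x a - y a| * 1 := by
          gcongr
          · linarith [hxa.2]
          · exact hxa.1
      _ = |x a - y a| + ∑ i ∈ s, |x i - y i| := by ring


/-- Contraction property of the expected-payoff map of the distributed learning
algorithm: if `γ < 1/(2·max_{m,n} θ_m B_m^n · max_n |𝒩_n|)` (and the maximum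
in-degree is at least 1), then `Q` is a maximum-norm contraction with contraction
constant `2γ·max_{m,n} θ_m B_m^n · max_n |𝒩_n| < 1`. -/
theorem stmt_14 (N M : ℕ) (γ : ℝ) (hγ : 0 < γ)
    (𝒩 : Fin (N + 1) → Finset (Fin (N + 1)))
    (hself : ∀ n, n ∉ 𝒩 n)
    (θ : Fin (M + 1) → ℝ) (hθ : ∀ m, 0 < θ m ∧ θ m < 1)
    (B : Fin (M + 1) → Fin (N + 1) → ℝ) (hB : ∀ m n, 0 < B m n)
    (g : Fin (N + 1) → Finset (Fin (N + 1)) → ℝ)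
    (hg : ∀ n S, S ⊆ 𝒩 n → 0 < g n S ∧ g n S < 1)
    -- Boltzmann mixed strategies generated from perceptions:
    (σ : (Fin (N + 1) → Fin (M + 1) → ℝ) → Fin (N + 1) → Fin (M + 1) → ℝ)
    (hσ : ∀ P i m, σ P i m = Real.exp (γ * P i m) / ∑ m', Real.exp (γ * P i m'))
    -- expected payoff of player n choosing channel m given perceptions P:
    (Q : (Fin (N + 1) → Fin (M + 1) → ℝ) → Fin (N + 1) → Fin (M + 1) → ℝ)
    (hQ : ∀ P n m, Q P n m = θ m * B m n * ∑ S ∈ (𝒩 n).powerset,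
      g n S * (∏ i ∈ S, σ P i m) * ∏ i ∈ 𝒩 n \ S, (1 - σ P i m))
    -- the maxima:
    (C : ℝ) (hC : C = Finset.univ.sup' Finset.univ_nonempty
      (fun q : Fin (M + 1) × Fin (N + 1) => θ q.1 * B q.1 q.2))
    (D : ℕ) (hD : D = Finset.univ.sup' Finset.univ_nonempty (fun n => (𝒩 n).card))
    (hD1 : 1 ≤ D)
    (hγlt : γ < 1 / (2 * C * (D : ℝ))) :
    2 * γ * C * (D : ℝ) < 1 ∧
    ∀ P Phat : Fin (N + 1) → Fin (M + 1) → ℝ, ∀ (n : Fin (N + 1)) (m : Fin (M + 1)),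
      |Q P n m - Q Phat n m| ≤ 2 * γ * C * (D : ℝ) *
        Finset.univ.sup' Finset.univ_nonempty
          (fun q : Fin (N + 1) × Fin (M + 1) => |P q.1 q.2 - Phat q.1 q.2|) := by
  -- C is positive
  have hCpos : 0 < C := by
    have h1 : θ 0 * B 0 0 ≤ C := by
      rw [hC]
      exact Finset.le_sup' (fun q : Fin (M + 1) × Fin (N + 1) => θ q.1 * B q.1 q.2)
        (Finset.mem_univ (0, 0))
    have := mul_pos (hθ 0).1 (hB 0 0)
    linarith
  have hDpos : (0 : ℝ) < (D : ℝ) := by exact_mod_cast Nat.lt_of_lt_of_le Nat.zero_lt_one hD1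
  have h2CD : (0 : ℝ) < 2 * C * (D : ℝ) := by positivity
  have hpart1 : 2 * γ * C * (D : ℝ) < 1 := by
    have := (lt_div_iff₀ h2CD).mp hγlt
    nlinarith
  refine ⟨hpart1, ?_⟩
  intro P Phat n m
  set K := Finset.univ.sup' Finset.univ_nonempty
    (fun q : Fin (N + 1) × Fin (M + 1) => |P q.1 q.2 - Phat q.1 q.2|) with hKdef
  have hKle : ∀ i m', |P i m' - Phat i m'| ≤ K := fun i m' =>
    Finset.le_sup' (fun q : Fin (N + 1) × Fin (M + 1) => |P q.1 q.2 - Phat q.1 q.2|)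
      (Finset.mem_univ (i, m'))
  have hK0 : 0 ≤ K := le_trans (abs_nonneg _) (hKle 0 0)
  -- σ values in [0,1]
  have hσbd : ∀ P' : Fin (N + 1) → Fin (M + 1) → ℝ, ∀ i m', 0 ≤ σ P' i m' ∧ σ P' i m' ≤ 1 := by
    intro P' i m'
    rw [hσ]
    have hden : 0 < ∑ m'', Real.exp (γ * P' i m'') :=
      Finset.sum_pos (fun _ _ => Real.exp_pos _) Finset.univ_nonempty
    constructor
    · positivity
    · rw [div_le_one hden]
      exact Finset.single_le_sum (f := fun m'' => Real.exp (γ * P' i m''))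
        (fun _ _ => (Real.exp_pos _).le) (Finset.mem_univ m')
  -- σ Lipschitz
  have hσlip : ∀ i, |σ P i m - σ Phat i m| ≤ 2 * γ * K := by
    intro i
    rw [hσ, hσ]
    exact aux_softmax γ hγ (P i) (Phat i) K (fun m' => hKle i m') m
  -- the multilinear bound
  have hlip := aux_lip (𝒩 n) (fun i => σ P i m) (fun i => σ Phat i m)
    (fun i _ => hσbd P i m) (fun i _ => hσbd Phat i m) (g n)
    (fun S hS => ⟨(hg n S (Finset.mem_powerset.mp hS)).1.le,
      (hg n S (Finset.mem_powerset.mp hS)).2.le⟩)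
  have hθB : 0 < θ m * B m n := mul_pos (hθ m).1 (hB m n)
  have hθBC : θ m * B m n ≤ C := by
    rw [hC]
    exact Finset.le_sup' (fun q : Fin (M + 1) × Fin (N + 1) => θ q.1 * B q.1 q.2)
      (Finset.mem_univ (m, n))
  have hcard : ((𝒩 n).card : ℝ) ≤ (D : ℝ) := by
    have : (𝒩 n).card ≤ D := by
      rw [hD]
      exact Finset.le_sup' (fun n => (𝒩 n).card) (Finset.mem_univ n)
    exact_mod_cast this
  rw [hQ, hQ, ← mul_sub, abs_mul, abs_of_pos hθB]
  calc θ m * B m n * |(∑ S ∈ (𝒩 n).powerset,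
          g n S * (∏ i ∈ S, σ P i m) * ∏ i ∈ 𝒩 n \ S, (1 - σ P i m)) -
        (∑ S ∈ (𝒩 n).powerset,
          g n S * (∏ i ∈ S, σ Phat i m) * ∏ i ∈ 𝒩 n \ S, (1 - σ Phat i m))|
      ≤ θ m * B m n * ∑ i ∈ 𝒩 n, |σ P i m - σ Phat i m| := by
        exact mul_le_mul_of_nonneg_left hlip hθB.le
    _ ≤ θ m * B m n * ∑ i ∈ 𝒩 n, 2 * γ * K := by
        apply mul_le_mul_of_nonneg_left _ hθB.le
        exact Finset.sum_le_sum fun i _ => hσlip i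
    _ = θ m * B m n * ((𝒩 n).card * (2 * γ * K)) := by
        rw [Finset.sum_const, nsmul_eq_mul]
    _ ≤ C * ((D : ℝ) * (2 * γ * K)) := by
        apply mul_le_mul hθBC _ (by positivity) hCpos.le
        exact mul_le_mul_of_nonneg_right hcard (by positivity)
    _ = 2 * γ * C * (D : ℝ) * K := by ring
end

section
/- Consider an N-player finite game with common strategy set ℳ and payoffs U_n : ℳ^N → ℝ, and fix γ > 0. Suppose σ* = (σ*_1,…,σ*_N) is a mixed strategy profile such that for every player n and strategy m ∈ ℳ, σ*_m^n = exp(γ·Q_m^n(σ*)) / Σ_{m'∈ℳ} exp(γ·Q_{m'}^n(σ*)), where Q_m^n(σ*) is player n's expected payoff when n plays m and every other player i randomizes according to σ*_i. Then σ* is a δ-approximate Nash equilibrium with δ = max_{n∈𝒩} { −(1/γ)·Σ_{m∈ℳ} σ*_m^n·ln σ*_m^n }: for every player n and every mixed strategy σ_n of player n, U_n(σ_n, σ*_{−n}) ≤ U_n(σ*_n, σ*_{−n}) + δ. -/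
/-- A softmax (Boltzmann) fixed point of the expected payoffs is a δ-approximate mixed
Nash equilibrium with `δ = maxₙ {−(1/γ)·Σₘ σ*ₘⁿ ln σ*ₘⁿ}` (the maximal weighted
entropy). -/
theorem stmt_15 (N M : ℕ) (γ : ℝ) (hγ : 0 < γ)
    (U : (Fin (N + 1) → Fin (M + 1)) → Fin (N + 1) → ℝ)
    -- the mixed strategy profile σ*:
    (σ : Fin (N + 1) → Fin (M + 1) → ℝ)
    (hσ0 : ∀ n m, 0 ≤ σ n m) (hσ1 : ∀ n, ∑ m, σ n m = 1)
    -- expected payoff of player n under an arbitrary mixed profile τ: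
    (Umix : (Fin (N + 1) → Fin (M + 1) → ℝ) → Fin (N + 1) → ℝ)
    (hUmix : ∀ τ n, Umix τ n =
      ∑ a : Fin (N + 1) → Fin (M + 1), (∏ i, τ i (a i)) * U a n)
    -- Q n m : expected payoff of player n playing m against σ*₋ₙ:
    (Q : Fin (N + 1) → Fin (M + 1) → ℝ)
    (hQ : ∀ n m, Q n m =
      Umix (Function.update σ n (fun m' => if m' = m then 1 else 0)) n)
    -- σ* is a softmax fixed point of its own expected payoffs:
    (hfix : ∀ n m, σ n m = Real.exp (γ * Q n m) / ∑ m', Real.exp (γ * Q n m'))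
    (δ : ℝ)
    (hδ : δ = Finset.univ.sup' Finset.univ_nonempty
      (fun n => -(1 / γ) * ∑ m, σ n m * Real.log (σ n m))) :
    -- then σ* is a δ-approximate Nash equilibrium:
    ∀ (n : Fin (N + 1)) (τ : Fin (M + 1) → ℝ),
      (∀ m, 0 ≤ τ m) → (∑ m, τ m = 1) →
      Umix (Function.update σ n τ) n ≤ Umix σ n + δ := by
  intro n τ hτ0 hτ1
  set P : (Fin (N + 1) → Fin (M + 1)) → ℝ :=
    fun a => ∏ i ∈ Finset.univ.erase n, σ i (a i) with hP
  -- linearity of the mixed payoff in player n's strategy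
  have key : ∀ ρ : Fin (M + 1) → ℝ,
      Umix (Function.update σ n ρ) n = ∑ m, ρ m * Q n m := by
    intro ρ
    have hprod : ∀ (ρ' : Fin (M + 1) → ℝ) (a : Fin (N + 1) → Fin (M + 1)),
        (∏ i, Function.update σ n ρ' i (a i)) = ρ' (a n) * P a := by
      intro ρ' a
      rw [← Finset.mul_prod_erase Finset.univ _ (Finset.mem_univ n)]
      simp only [Function.update_self, hP]
      congr 1
      exact Finset.prod_congr rfl fun i hi => by
        rw [Function.update_of_ne (Finset.ne_of_mem_erase hi)]
    have h2 : ∀ m, Q n m = ∑ a : Fin (N + 1) → Fin (M + 1),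
        (if a n = m then 1 else 0) * (P a * U a n) := by
      intro m
      rw [hQ, hUmix]
      exact Finset.sum_congr rfl fun a _ => by rw [hprod]; ring
    rw [hUmix]
    calc ∑ a : Fin (N + 1) → Fin (M + 1), (∏ i, Function.update σ n ρ i (a i)) * U a n
        = ∑ a : Fin (N + 1) → Fin (M + 1), ρ (a n) * (P a * U a n) := by
          exact Finset.sum_congr rfl fun a _ => by rw [hprod]; ring
      _ = ∑ a : Fin (N + 1) → Fin (M + 1), ∑ m, ρ m * ((if a n = m then 1 else 0) * (P a * U a n)) := by
          refine Finset.sum_congr rfl fun a _ => ?_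
          simp only [mul_ite, mul_one, mul_zero, ite_mul, one_mul, zero_mul,
            Finset.sum_ite_eq, Finset.mem_univ, if_true]
      _ = ∑ m, ρ m * Q n m := by
          rw [Finset.sum_comm]
          exact Finset.sum_congr rfl fun m _ => by rw [h2, Finset.mul_sum]
  -- analytic part
  set Z := ∑ m', Real.exp (γ * Q n m') with hZ
  have hZpos : 0 < Z := Finset.sum_pos (fun m _ => Real.exp_pos _) Finset.univ_nonempty
  have hσpos : ∀ m, 0 < σ n m := fun m => by
    rw [hfix n m]; exact div_pos (Real.exp_pos _) hZpos
  have hσle1 : ∀ m, σ n m ≤ 1 := fun m => by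
    have := Finset.single_le_sum (f := σ n) (fun i _ => hσ0 n i) (Finset.mem_univ m)
    rwa [hσ1 n] at this
  have hQval : ∀ m, Q n m = (Real.log (σ n m) + Real.log Z) / γ := by
    intro m
    rw [hfix n m, Real.log_div (Real.exp_ne_zero _) (ne_of_gt hZpos), Real.log_exp]
    field_simp
    ring
  have expand : ∀ ρ : Fin (M + 1) → ℝ, (∑ m, ρ m = 1) →
      ∑ m, ρ m * Q n m = (∑ m, ρ m * Real.log (σ n m)) / γ + Real.log Z / γ := by
    intro ρ hρ
    have h1 : ∑ m, ρ m * Q n m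
        = ∑ m, (ρ m * Real.log (σ n m) / γ + ρ m * (Real.log Z / γ)) := by
      refine Finset.sum_congr rfl fun m _ => ?_
      rw [hQval m]; field_simp
    rw [h1, Finset.sum_add_distrib, ← Finset.sum_div, ← Finset.sum_mul, hρ]
    ring
  have hUσ : Umix σ n = ∑ m, σ n m * Q n m := by
    have := key (σ n)
    rwa [Function.update_eq_self] at this
  rw [key τ, hUσ, expand τ hτ1, expand (σ n) (hσ1 n)]
  have hE : -(1 / γ) * ∑ m, σ n m * Real.log (σ n m) ≤ δ := by
    rw [hδ]
    exact Finset.le_sup' (fun n => -(1 / γ) * ∑ m, σ n m * Real.log (σ n m))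
      (Finset.mem_univ n)
  have hτlog : ∑ m, τ m * Real.log (σ n m) ≤ 0 :=
    Finset.sum_nonpos fun m _ =>
      mul_nonpos_of_nonneg_of_nonpos (hτ0 m) (Real.log_nonpos (le_of_lt (hσpos m)) (hσle1 m))
  have h3 : (∑ m, τ m * Real.log (σ n m)) / γ ≤ 0 := div_nonpos_of_nonpos_of_nonneg hτlog hγ.le
  have h4 : -(1 / γ) * (∑ m, σ n m * Real.log (σ n m))
      = -((∑ m, σ n m * Real.log (σ n m)) / γ) := by ring
  linarith [hE, h3, h4.symm ▸ hE]
end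

section
/- Consider the spatial spectrum access game under the physical interference model with homogeneous channel availability: players 𝒩 = {1,…,N}, channels ℳ = {1,…,M}, parameters θ ∈ (0,1], W > 0, α > 0, transmission powers η_n > 0, transmitter–receiver distances d_n > 0, symmetric cross distances d_{ij} = d_{ji} > 0 for i ≠ j, background noise ω_0 > 0, and primary-user interference ω_m^n ≥ 0; player n's payoff under profile a ∈ ℳ^N is U_n(a) = θ·W·log₂( 1 + η_n·d_n^{−α} / ( ω_0 + ω_{a_n}^n + Σ_{i ≠ n : a_i = a_n} η_i·d_{in}^{−α} ) ). Then Φ(a) = −Σ_{i} Σ_{j ≠ i} η_i·η_j·d_{ij}^{−α}·𝟙{a_i = a_j} − 2·Σ_{n=1}^N η_n·(ω_{a_n}^n + ω_0) is an ordinal potential for the game, and consequently the game has a pure Nash equilibrium. -/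
private lemma sign_eq_sign_aux (x y : ℝ) (hp : 0 < x ↔ 0 < y) (hn : x < 0 ↔ y < 0) :
    Real.sign x = Real.sign y := by
  rcases lt_trichotomy x 0 with h | h | h
  · rw [Real.sign_of_neg h, Real.sign_of_neg (hn.mp h)]
  · have hy : y = 0 := by
      rcases lt_trichotomy y 0 with h' | h' | h'
      · exact absurd (hn.mpr h') (by rw [h]; exact lt_irrefl 0)
      · exact h'
      · exact absurd (hp.mpr h') (by rw [h]; exact lt_irrefl 0)
    rw [h, hy]
  · rw [Real.sign_of_pos h, Real.sign_of_pos (hp.mp h)]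

private lemma sign_mul_pos_aux (c t : ℝ) (hc : 0 < c) :
    Real.sign (c * t) = Real.sign t := by
  apply sign_eq_sign_aux
  · exact ⟨fun h => by nlinarith, fun h => mul_pos hc h⟩
  · exact ⟨fun h => by nlinarith, fun h => mul_neg_of_pos_of_neg hc h⟩

private lemma key_U (θW c x y : ℝ) (hθW : 0 < θW) (hc : 0 < c) (hx : 0 < x) (hy : 0 < y) :
    (0 < θW * Real.logb 2 (1 + c / y) - θW * Real.logb 2 (1 + c / x) ↔ 0 < x - y) ∧
    (θW * Real.logb 2 (1 + c / y) - θW * Real.logb 2 (1 + c / x) < 0 ↔ x - y < 0) := by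
  have harg : ∀ z : ℝ, 0 < z → (0 : ℝ) < 1 + c / z := fun z hz => by positivity
  have hmono : ∀ u v : ℝ, 0 < u → 0 < v →
      (Real.logb 2 (1 + c / u) < Real.logb 2 (1 + c / v) ↔ v < u) := by
    intro u v hu hv
    rw [Real.logb_lt_logb_iff one_lt_two (harg u hu) (harg v hv)]
    constructor
    · intro h
      exact (div_lt_div_iff_of_pos_left hc hu hv).mp (by linarith)
    · intro h
      have := (div_lt_div_iff_of_pos_left hc hu hv).mpr h
      linarith
  constructor
  · rw [sub_pos]
    constructor
    · intro h
      have hlt : Real.logb 2 (1 + c / x) < Real.logb 2 (1 + c / y) := by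
        by_contra hcon
        push_neg at hcon
        nlinarith
      have := (hmono x y hx hy).mp hlt
      linarith
    · intro h
      have := (hmono x y hx hy).mpr (by linarith)
      nlinarith
  · rw [sub_neg]
    constructor
    · intro h
      have hlt : Real.logb 2 (1 + c / y) < Real.logb 2 (1 + c / x) := by
        by_contra hcon
        push_neg at hcon
        nlinarith
      have := (hmono y x hy hx).mp hlt
      linarith
    · intro h
      have := (hmono y x hy hx).mpr (by linarith)
      nlinarith

private lemma key_phi {N : ℕ} {K : Type*} [DecidableEq K] (η : Fin N → ℝ)
    (c : Fin N → Fin N → ℝ) (hcsym : ∀ i j, i ≠ j → c i j = c j i)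
    (g : K → Fin N → ℝ) (a : Fin N → K) (n : Fin N) (m : K) :
    (-(∑ i, ∑ j ∈ Finset.univ.erase i,
        η i * η j * c i j * (if Function.update a n m i = Function.update a n m j then 1 else 0)) -
      2 * ∑ k, η k * g (Function.update a n m k) k) -
    (-(∑ i, ∑ j ∈ Finset.univ.erase i,
        η i * η j * c i j * (if a i = a j then 1 else 0)) -
      2 * ∑ k, η k * g (a k) k)
    = 2 * η n *
      ((g (a n) n + ∑ i ∈ Finset.univ.filter (fun i => i ≠ n ∧ a i = a n), η i * c i n) -
       (g (Function.update a n m n) n +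
        ∑ i ∈ Finset.univ.filter
          (fun i => i ≠ n ∧ Function.update a n m i = Function.update a n m n),
          η i * c i n)) := by
  classical
  set a' := Function.update a n m with ha'def
  have ha'n : ∀ k, k ≠ n → a' k = a k := fun k hk => Function.update_of_ne hk _ _
  -- row sum lemma
  have hrow : ∀ b : Fin N → K,
      ∑ j ∈ Finset.univ.erase n, η n * η j * c n j * (if b n = b j then 1 else 0)
        = η n * ∑ i ∈ Finset.univ.filter (fun i => i ≠ n ∧ b i = b n), η i * c i n := by
    intro b
    rw [Finset.mul_sum]
    have hfe : Finset.univ.filter (fun i => i ≠ n ∧ b i = b n)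
        = (Finset.univ.erase n).filter (fun i => b i = b n) := by
      ext i
      simp only [Finset.mem_filter, Finset.mem_erase, Finset.mem_univ, true_and, and_comm]
    rw [hfe, Finset.sum_filter]
    apply Finset.sum_congr rfl
    intro j hj
    have hjn : j ≠ n := (Finset.mem_erase.mp hj).1
    by_cases h : b n = b j
    · rw [if_pos h, if_pos h.symm, hcsym j n hjn]
      ring
    · rw [if_neg h, if_neg (fun hh => h hh.symm)]
      ring
  -- symmetry of pair terms
  have hTsym : ∀ (b : Fin N → K) (i : Fin N), i ≠ n →
      η i * η n * c i n * (if b i = b n then 1 else 0)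
        = η n * η i * c n i * (if b n = b i then 1 else 0) := by
    intro b i hin
    by_cases h : b i = b n
    · rw [if_pos h, if_pos h.symm, hcsym i n hin]
      ring
    · rw [if_neg h, if_neg (fun hh => h hh.symm)]
      ring
  -- the noise-term difference
  have hB : (∑ k, η k * g (a' k) k) - (∑ k, η k * g (a k) k)
      = η n * g (a' n) n - η n * g (a n) n := by
    rw [← Finset.sum_sub_distrib]
    exact Finset.sum_eq_single n
      (fun k _ hk => by rw [ha'n k hk]; ring)
      (fun h => absurd (Finset.mem_univ n) h)
  -- the interference-term difference
  have hinner : ∀ i : Fin N, i ≠ n →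
      (∑ j ∈ Finset.univ.erase i,
        (η i * η j * c i j * (if a' i = a' j then 1 else 0) -
         η i * η j * c i j * (if a i = a j then 1 else 0)))
      = η i * η n * c i n * (if a' i = a' n then 1 else 0) -
        η i * η n * c i n * (if a i = a n then 1 else 0) := by
    intro i hi
    apply Finset.sum_eq_single_of_mem n (Finset.mem_erase.mpr ⟨Ne.symm hi, Finset.mem_univ n⟩)
    intro j hj hjn
    rw [ha'n i hi, ha'n j hjn]
    ring
  have hA : (∑ i, ∑ j ∈ Finset.univ.erase i,
        η i * η j * c i j * (if a' i = a' j then 1 else 0))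
      - (∑ i, ∑ j ∈ Finset.univ.erase i,
        η i * η j * c i j * (if a i = a j then 1 else 0))
      = 2 * ((η n * ∑ i ∈ Finset.univ.filter (fun i => i ≠ n ∧ a' i = a' n), η i * c i n)
           - (η n * ∑ i ∈ Finset.univ.filter (fun i => i ≠ n ∧ a i = a n), η i * c i n)) := by
    simp only [← Finset.sum_sub_distrib]
    have hsplit := (Finset.add_sum_erase Finset.univ
      (fun i => ∑ j ∈ Finset.univ.erase i,
        (η i * η j * c i j * (if a' i = a' j then 1 else 0) -
         η i * η j * c i j * (if a i = a j then 1 else 0))) (Finset.mem_univ n)).symm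
    rw [hsplit]
    have hrest : ∑ i ∈ Finset.univ.erase n,
        (∑ j ∈ Finset.univ.erase i,
          (η i * η j * c i j * (if a' i = a' j then 1 else 0) -
           η i * η j * c i j * (if a i = a j then 1 else 0)))
        = ∑ i ∈ Finset.univ.erase n,
          (η n * η i * c n i * (if a' n = a' i then 1 else 0) -
           η n * η i * c n i * (if a n = a i then 1 else 0)) := by
      apply Finset.sum_congr rfl
      intro i hi
      have hin : i ≠ n := (Finset.mem_erase.mp hi).1
      rw [hinner i hin, hTsym a' i hin, hTsym a i hin]
    rw [hrest]
    have hfirst : ∑ j ∈ Finset.univ.erase n,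
        (η n * η j * c n j * (if a' n = a' j then 1 else 0) -
         η n * η j * c n j * (if a n = a j then 1 else 0))
        = (η n * ∑ i ∈ Finset.univ.filter (fun i => i ≠ n ∧ a' i = a' n), η i * c i n)
          - (η n * ∑ i ∈ Finset.univ.filter (fun i => i ≠ n ∧ a i = a n), η i * c i n) := by
      rw [Finset.sum_sub_distrib, hrow a', hrow a]
    rw [hfirst]
    ring
  linear_combination (-1 : ℝ) * hA - 2 * hB

/-- Spatial spectrum access game under the physical interference model with homogeneous
channel availability: `Φ(a) = −Σᵢ Σ_{j≠i} ηᵢηⱼ d_{ij}^{−α} 𝟙{aᵢ=aⱼ} − 2Σₙ ηₙ(ω_{aₙ}ⁿ+ω₀)`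
is an ordinal potential, and the game has a pure Nash equilibrium. -/
theorem stmt_16 (N M : ℕ)
    (θ W α : ℝ) (hθ : 0 < θ ∧ θ ≤ 1) (hW : 0 < W) (hα : 0 < α)
    (η : Fin N → ℝ) (hη : ∀ n, 0 < η n)
    (d : Fin N → ℝ) (hd : ∀ n, 0 < d n)
    (dc : Fin N → Fin N → ℝ) (hdc : ∀ i j, i ≠ j → 0 < dc i j)
    (hdcsym : ∀ i j, i ≠ j → dc i j = dc j i)
    (ω0 : ℝ) (hω0 : 0 < ω0)
    (ω : Fin (M + 1) → Fin N → ℝ) (hω : ∀ m n, 0 ≤ ω m n)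
    (U : (Fin N → Fin (M + 1)) → Fin N → ℝ)
    (hU : ∀ a n, U a n = θ * W * Real.logb 2 (1 + η n * d n ^ (-α) /
      (ω0 + ω (a n) n +
        ∑ i ∈ Finset.univ.filter (fun i => i ≠ n ∧ a i = a n),
          η i * dc i n ^ (-α))))
    (Φ : (Fin N → Fin (M + 1)) → ℝ)
    (hΦ : ∀ a, Φ a = -(∑ i, ∑ j ∈ Finset.univ.erase i,
        η i * η j * dc i j ^ (-α) * (if a i = a j then 1 else 0)) -
      2 * ∑ n, η n * (ω (a n) n + ω0)) :
    (∀ (n : Fin N) (a : Fin N → Fin (M + 1)) (m : Fin (M + 1)),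
      Real.sign (Φ (Function.update a n m) - Φ a) =
        Real.sign (U (Function.update a n m) n - U a n)) ∧
    ∃ a : Fin N → Fin (M + 1), ∀ (n : Fin N) (m : Fin (M + 1)),
      U (Function.update a n m) n ≤ U a n := by
  classical
  obtain ⟨hθ0, -⟩ := hθ
  -- positivity of denominators
  have hDpos : ∀ (a : Fin N → Fin (M + 1)) (n : Fin N),
      0 < ω0 + ω (a n) n + ∑ i ∈ Finset.univ.filter (fun i => i ≠ n ∧ a i = a n),
        η i * dc i n ^ (-α) := by
    intro a n
    have hsum : 0 ≤ ∑ i ∈ Finset.univ.filter (fun i => i ≠ n ∧ a i = a n),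
        η i * dc i n ^ (-α) := by
      apply Finset.sum_nonneg
      intro i hi
      simp only [Finset.mem_filter] at hi
      exact le_of_lt (mul_pos (hη i) (Real.rpow_pos_of_pos (hdc i n hi.2.1) _))
    have := hω (a n) n
    linarith
  -- sign equality for each deviation
  have hmain : ∀ (n : Fin N) (a : Fin N → Fin (M + 1)) (m : Fin (M + 1)),
      Real.sign (Φ (Function.update a n m) - Φ a) =
        Real.sign (U (Function.update a n m) n - U a n) := by
    intro n a m
    set a' := Function.update a n m with ha'def
    set x : ℝ := ω0 + ω (a n) n + ∑ i ∈ Finset.univ.filter (fun i => i ≠ n ∧ a i = a n),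
        η i * dc i n ^ (-α) with hxdef
    set y : ℝ := ω0 + ω (a' n) n + ∑ i ∈ Finset.univ.filter (fun i => i ≠ n ∧ a' i = a' n),
        η i * dc i n ^ (-α) with hydef
    have hx : 0 < x := hDpos a n
    have hy : 0 < y := hDpos a' n
    have hc : 0 < η n * d n ^ (-α) :=
      mul_pos (hη n) (Real.rpow_pos_of_pos (hd n) _)
    have hθW : 0 < θ * W := mul_pos hθ0 hW
    -- the potential difference
    have hkey := key_phi η (fun i j => dc i j ^ (-α))
      (fun i j hij => by rw [hdcsym i j hij]) (fun k i => ω k i + ω0) a n m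
    have hPhid : Φ a' - Φ a = 2 * η n * (x - y) := by
      rw [hΦ, hΦ]
      rw [hxdef, hydef]
      linear_combination hkey
    -- the payoff difference
    have hUd : U a' n - U a n =
        θ * W * Real.logb 2 (1 + η n * d n ^ (-α) / y) -
        θ * W * Real.logb 2 (1 + η n * d n ^ (-α) / x) := by
      rw [hU, hU]
    obtain ⟨hp, hn⟩ := key_U (θ * W) (η n * d n ^ (-α)) x y hθW hc hx hy
    rw [hPhid, sign_mul_pos_aux _ _ (by have := hη n; linarith)]
    rw [hUd]
    exact (sign_eq_sign_aux _ _ hp hn).symm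
  refine ⟨hmain, ?_⟩
  -- existence of a pure Nash equilibrium via the maximizer of Φ
  obtain ⟨a, ha⟩ := Finite.exists_max Φ
  refine ⟨a, fun n m => ?_⟩
  by_contra hcon
  push_neg at hcon
  have hU1 : Real.sign (U (Function.update a n m) n - U a n) = 1 :=
    Real.sign_of_pos (by linarith)
  have hP1 : Real.sign (Φ (Function.update a n m) - Φ a) = 1 := by
    rw [hmain n a m]; exact hU1
  have hle : Φ (Function.update a n m) - Φ a ≤ 0 := by
    have := ha (Function.update a n m)
    linarith
  rcases lt_or_eq_of_le hle with h | h
  · rw [Real.sign_of_neg h] at hP1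
    norm_num at hP1
  · rw [h, Real.sign_zero] at hP1
    norm_num at hP1
end
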